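/- arXiv:1302.7119 — 7 statements merged into one kernel-verified Lean document; each statement's English description precedes it below -/
import Mathlib

section
/- Fix integers r ≥ 0, i with 1 ≤ i ≤ r+1, and j ≥ 1. For every point (x, z_0, …, z_{r+1}) ∈ ℝ^{r+3} with x ≠ 0, the function (x^{i+j}/(i+j)!)·D^i(z_0·x^{−j}) (where D is applied i times to the smooth function (x,z) ↦ z_0·x^{−j} on the open set {x ≠ 0}) equals the polynomial expression Σ_{m=0}^{i} (−1)^{i−m}·binom(i,m)·((i+j−m−1)!/((j−1)!·(i+j)!))·x^m·z_m; consequently g_{i,j} extends to a polynomial function on all of ℝ^{r+3} which is linear in z_0, …, z_i. -/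
open scoped BigOperators

/-- Partial derivative of a function on `ℝⁿ = (Fin n → ℝ)` with respect to the `m`-th
coordinate (and `0` if `m` is out of range). -/
noncomputable def pderiv' (n m : ℕ) (f : (Fin n → ℝ) → ℝ) : (Fin n → ℝ) → ℝ :=
  fun p => if h : m < n then fderiv ℝ f p (Pi.single (⟨m, h⟩ : Fin n) 1) else 0

/-- The total derivative operator `D f = ∂f/∂x + ∑_{m=0}^{r} z_{m+1} ∂f/∂z_m` on functions of
the variables `(x, z_0, …, z_{r+1})`, where `x` is coordinate `0` and `z_m` is coordinate
`m+1`. -/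
noncomputable def Dop (r : ℕ) (f : (Fin (r+3) → ℝ) → ℝ) : (Fin (r+3) → ℝ) → ℝ :=
  fun p => pderiv' (r+3) 0 f p +
    ∑ m : Fin (r+1), p ⟨m.val + 2, by have := m.isLt; omega⟩ * pderiv' (r+3) (m.val + 1) f p

/-- The polynomial function
`g_{i,j}(x,z) = ∑_{m=0}^{i} (−1)^{i−m} C(i,m) ((i+j−m−1)!/((j−1)!(i+j)!)) x^m z_m`. -/
noncomputable def gfun (r i j : ℕ) : (Fin (r+3) → ℝ) → ℝ :=
  fun p => ∑ m : Fin (i+1),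
    (-1 : ℝ) ^ (i - m.val) * (i.choose m.val : ℝ) *
      ((Nat.factorial (i + j - m.val - 1) : ℝ) /
        ((Nat.factorial (j - 1) : ℝ) * (Nat.factorial (i + j) : ℝ))) *
      (p 0) ^ (m.val) * (if h : m.val + 1 < r + 3 then p ⟨m.val + 1, h⟩ else 0)

/-- `g_{i,j}^{(s)} = ∂^s g_{i,j} / ∂x^s`. -/
noncomputable def gs (r i j s : ℕ) : (Fin (r+3) → ℝ) → ℝ :=
  (pderiv' (r+3) 0)^[s] (gfun r i j)

open ContinuousLinearMap

/-- safe coordinate getter -/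
noncomputable def Gg (r t : ℕ) : (Fin (r+3) → ℝ) → ℝ :=
  fun p => if h : t < r+3 then p ⟨t, h⟩ else 0

/-- safe coordinate projection CLM -/
noncomputable def projD (r t : ℕ) : (Fin (r+3) → ℝ) →L[ℝ] ℝ :=
  if h : t < r+3 then ContinuousLinearMap.proj (⟨t, h⟩ : Fin (r+3)) else 0

lemma Gg_eq (r t : ℕ) (p : Fin (r+3) → ℝ) : Gg r t p = projD r t p := by
  unfold Gg projD; split <;> simp

lemma projD_single (r t : ℕ) (u : Fin (r+3)) :
    projD r t (Pi.single u 1) = if u.val = t then 1 else 0 := by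
  unfold projD
  split
  · rename_i h
    simp [Pi.single_apply, Fin.ext_iff, eq_comm]
  · rename_i h
    have : u.val ≠ t := by omega
    simp [this]

noncomputable def cc (j k m : ℕ) : ℝ :=
  (-1)^(k-m) * (k.choose m) * (Nat.factorial (k+j-m-1)) / (Nat.factorial (j-1))

noncomputable def Hh (r j k : ℕ) : (Fin (r+3) → ℝ) → ℝ :=
  fun p => ∑ m ∈ Finset.range (k+1), cc j k m * Gg r (m+1) p * (p 0)^((m:ℤ) - (k+j))

lemma pderiv'_of_hasFDerivAt {n : ℕ} {f : (Fin n → ℝ) → ℝ} {L : (Fin n → ℝ) →L[ℝ] ℝ} {p} (h : HasFDerivAt f L p) (m : ℕ) :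
    pderiv' n m f p = if hm : m < n then L (Pi.single ⟨m,hm⟩ 1) else 0 := by
  unfold pderiv'; split <;> simp [h.fderiv]

lemma pderiv'_congr {n m : ℕ} {f g : (Fin n → ℝ) → ℝ} {p} (h : f =ᶠ[nhds p] g) :
    pderiv' n m f p = pderiv' n m g p := by
  unfold pderiv'; split <;> simp [h.fderiv_eq]

lemma Dop_congr {r : ℕ} {f g : (Fin (r+3) → ℝ) → ℝ} {p} (h : f =ᶠ[nhds p] g) :
    Dop r f p = Dop r g p := by
  unfold Dop
  rw [pderiv'_congr h]
  congr 1
  refine Finset.sum_congr rfl fun m _ => ?_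
  rw [pderiv'_congr h]

lemma Dop_eq (r : ℕ) (f : (Fin (r+3) → ℝ) → ℝ) (p : Fin (r+3) → ℝ) :
    Dop r f p = pderiv' (r+3) 0 f p +
      ∑ m ∈ Finset.range (r+1), Gg r (m+2) p * pderiv' (r+3) (m+1) f p := by
  unfold Dop
  congr 1
  rw [← Fin.sum_univ_eq_sum_range (fun m => Gg r (m+2) p * pderiv' (r+3) (m+1) f p) (r+1)]
  refine Finset.sum_congr rfl fun m _ => ?_
  congr 1
  unfold Gg
  rw [dif_pos]

lemma hasFDerivAt_term (r t : ℕ) (e : ℤ) (c : ℝ) (p : Fin (r+3) → ℝ) (hp : p 0 ≠ 0) :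
    HasFDerivAt (fun q => c * Gg r t q * (q 0)^e)
      ((c * (p 0)^e) • projD r t + (c * Gg r t p * (e : ℝ) * (p 0)^(e-1)) • projD r 0) p := by
  have hproj0 : HasFDerivAt (fun q : Fin (r+3) → ℝ => q 0) (projD r 0) p := by
    have h0 := (projD r 0).hasFDerivAt (x := p)
    apply HasFDerivAt.congr_of_eventuallyEq h0
    filter_upwards with q
    have := Gg_eq r 0 q
    unfold Gg at this
    rw [dif_pos (by omega)] at this
    exact this.symm
  have h1 : HasFDerivAt (fun q : Fin (r+3) → ℝ => c * Gg r t q) (c • projD r t) p := by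
    have hG : HasFDerivAt (Gg r t) (projD r t) p := by
      have := (projD r t).hasFDerivAt (x := p)
      apply HasFDerivAt.congr_of_eventuallyEq this
      filter_upwards with q using (Gg_eq r t q)
    exact hG.const_mul c
  have h2 : HasFDerivAt (fun q : Fin (r+3) → ℝ => (q 0)^e) (((e:ℝ) * (p 0)^(e-1)) • projD r 0) p :=
    (hasDerivAt_zpow e (p 0) (Or.inl hp)).comp_hasFDerivAt (f := fun q : Fin (r+3) → ℝ => q 0) p hproj0
  have := h1.fun_mul h2
  exact this.congr_fderiv (by ext v; simp [smul_smul]; ring)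

lemma hasFDerivAt_Hh (r j k : ℕ) (p : Fin (r+3) → ℝ) (hp : p 0 ≠ 0) :
    HasFDerivAt (Hh r j k)
      (∑ m ∈ Finset.range (k+1),
        ((cc j k m * (p 0)^((m:ℤ)-(k+j))) • projD r (m+1)
          + (cc j k m * Gg r (m+1) p * ((((m:ℤ)-(k+j)) : ℤ) : ℝ) * (p 0)^((m:ℤ)-(k+j)-1)) • projD r 0)) p := by
  unfold Hh
  exact HasFDerivAt.fun_sum fun m _ => hasFDerivAt_term r (m+1) ((m:ℤ)-(k+j)) (cc j k m) p hp

lemma Dop_Hh_raw (r j k : ℕ) (hk : k ≤ r) (p : Fin (r+3) → ℝ) (hp : p 0 ≠ 0) :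
    Dop r (Hh r j k) p
      = (∑ m ∈ Finset.range (k+1),
          cc j k m * Gg r (m+1) p * ((((m:ℤ)-(k+j)) : ℤ) : ℝ) * (p 0)^((m:ℤ)-(k+j)-1))
        + ∑ m ∈ Finset.range (k+1), Gg r (m+2) p * (cc j k m * (p 0)^((m:ℤ)-(k+j))) := by
  have hL := hasFDerivAt_Hh r j k p hp
  rw [Dop_eq]
  rw [pderiv'_of_hasFDerivAt hL 0]
  rw [dif_pos (by omega : (0:ℕ) < r+3)]
  congr 1
  · rw [ContinuousLinearMap.sum_apply]
    refine Finset.sum_congr rfl fun m hm => ?_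
    rw [ContinuousLinearMap.add_apply, ContinuousLinearMap.smul_apply,
      ContinuousLinearMap.smul_apply, projD_single, projD_single]
    simp
  · have key : ∀ m ∈ Finset.range (r+1),
        Gg r (m+2) p * pderiv' (r+3) (m+1) (Hh r j k) p
        = ∑ m' ∈ Finset.range (k+1),
            if m' = m then Gg r (m'+2) p * (cc j k m' * (p 0)^((m':ℤ)-(k+j))) else 0 := by
      intro m hm
      simp only [Finset.mem_range] at hm
      rw [pderiv'_of_hasFDerivAt hL (m+1), dif_pos (by omega : m+1 < r+3)]
      rw [ContinuousLinearMap.sum_apply, Finset.mul_sum]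
      refine Finset.sum_congr rfl fun m' hm' => ?_
      rw [ContinuousLinearMap.add_apply, ContinuousLinearMap.smul_apply,
        ContinuousLinearMap.smul_apply, projD_single, projD_single]
      by_cases h : m' = m
      · subst h; simp
      · have h1 : ((⟨m+1, by omega⟩ : Fin (r+3)) : ℕ) ≠ m'+1 := by simp; omega
        simp [h1, h]
        intro h'; exact absurd h'.symm h
    rw [Finset.sum_congr rfl key, Finset.sum_comm]
    refine Finset.sum_congr rfl fun m' hm' => ?_
    simp only [Finset.mem_range] at hm'
    rw [Finset.sum_ite_eq (Finset.range (r+1)) m'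
      (fun _ => Gg r (m'+2) p * (cc j k m' * (p 0)^((m':ℤ)-(k+j))))]
    rw [if_pos (by simp; omega)]
lemma cc_of_gt (j k m : ℕ) (h : k < m) : cc j k m = 0 := by
  unfold cc
  rw [Nat.choose_eq_zero_of_lt h]
  simp

lemma cc_succ0 (j k : ℕ) (hj : 1 ≤ j) :
    cc j (k+1) 0 = ((0:ℝ) - (k+j)) * cc j k 0 := by
  unfold cc
  have e1 : k+1+j-0-1 = (k+j-1)+1 := by omega
  have e2 : k+j-0-1 = k+j-1 := by omega
  rw [e1, e2, Nat.factorial_succ]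
  have e3 : ((k+j-1 : ℕ) : ℝ) = (k:ℝ)+j-1 := by
    have h : (k+j-1) + 1 = k+j := by omega
    have h2 := congrArg (fun t : ℕ => (t : ℝ)) h
    push_cast at h2; linarith
  have hJ : ((Nat.factorial (j-1) : ℝ)) ≠ 0 := Nat.cast_ne_zero.mpr (Nat.factorial_ne_zero _)
  push_cast [e3, pow_succ]
  field_simp
  simp
  ring

lemma cc_succ (j k m : ℕ) (hj : 1 ≤ j) (hm : m ≤ k) :
    cc j (k+1) (m+1) = (((m+1:ℕ):ℝ) - (k+j)) * cc j k (m+1) + cc j k m := by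
  have hJ : ((Nat.factorial (j-1) : ℝ)) ≠ 0 := Nat.cast_ne_zero.mpr (Nat.factorial_ne_zero _)
  rcases Nat.lt_or_ge m k with hlt | hge
  · unfold cc
    have e1 : k+1-(m+1) = (k-m-1)+1 := by omega
    have e2 : k+1+j-(m+1)-1 = (k+j-m-2)+1 := by omega
    have e3 : k-(m+1) = k-m-1 := by omega
    have e4 : k+j-(m+1)-1 = k+j-m-2 := by omega
    have e5 : k+j-m-1 = (k+j-m-2)+1 := by omega
    have e7 : k-m = (k-m-1)+1 := by omega
    rw [e1, e2, e3, e4, e5, e7, Nat.choose_succ_succ, Nat.factorial_succ]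
    simp only [Nat.add_sub_cancel]
    have e6 : ((k+j-m-2 : ℕ) : ℝ) = (k:ℝ)+(j:ℝ)-(m:ℝ)-2 := by
      have h : (k+j-m-2) + (m+2) = k+j := by omega
      have h2 := congrArg (fun t : ℕ => (t : ℝ)) h
      push_cast at h2
      linarith
    push_cast [e6, pow_succ]
    field_simp
    ring
  · have hmk : m = k := by omega
    subst hmk
    have h1 : cc j m (m+1) = 0 := cc_of_gt j m (m+1) (by omega)
    have h2 : cc j m m = 1 := by
      unfold cc
      have : m+j-m-1 = j-1 := by omega
      rw [this]
      simp [Nat.choose_self, div_self hJ]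
    have h3 : cc j (m+1) (m+1) = 1 := by
      unfold cc
      have : m+1+j-(m+1)-1 = j-1 := by omega
      rw [this]
      simp [Nat.choose_self, div_self hJ]
    rw [h1, h2, h3]
    ring

lemma Dop_Hh (r j k : ℕ) (hj : 1 ≤ j) (hk : k ≤ r) (p : Fin (r+3) → ℝ) (hp : p 0 ≠ 0) :
    Dop r (Hh r j k) p = Hh r j (k+1) p := by
  rw [Dop_Hh_raw r j k hk p hp]
  have target : Hh r j (k+1) p = ∑ m ∈ Finset.range (k+2),
      ((cc j k m * Gg r (m+1) p * ((((m:ℤ)-(k+j)) : ℤ) : ℝ) * (p 0)^((m:ℤ)-(k+j)-1))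
        + (if m = 0 then 0
           else Gg r ((m-1)+2) p * (cc j k (m-1) * (p 0)^(((m-1:ℕ):ℤ)-(k+j))))) := by
    unfold Hh
    refine Finset.sum_congr rfl fun m hm => ?_
    simp only [Finset.mem_range] at hm
    rcases m with _ | m'
    · rw [if_pos rfl, cc_succ0 j k hj]
      have he : ((0:ℕ):ℤ) - ((k+1:ℕ)+(j:ℕ)) = ((0:ℕ):ℤ)-((k:ℤ)+j)-1 := by push_cast; ring
      rw [he]
      push_cast
      ring
    · rw [if_neg (by omega), cc_succ j k m' hj (by omega)]
      simp only [Nat.add_sub_cancel]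
      have he : ((m'+1:ℕ):ℤ) - ((k+1:ℕ)+(j:ℕ)) = ((m'+1:ℕ):ℤ)-((k:ℤ)+j)-1 := by push_cast; ring
      rw [he]
      have he2 : ((m':ℕ):ℤ)-((k:ℤ)+(j:ℤ)) = ((m'+1:ℕ):ℤ)-((k:ℤ)+j)-1 := by push_cast; ring
      rw [he2]
      push_cast
      ring
  rw [target, Finset.sum_add_distrib]
  congr 1
  · symm
    rw [Finset.sum_range_succ, cc_of_gt j k (k+1) (by omega)]
    simp
  · symm
    rw [Finset.sum_range_succ']
    simp only [Nat.add_sub_cancel, if_neg (Nat.succ_ne_zero _)]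
    simp [mul_comm]

lemma key_iter (r j : ℕ) (hj : 1 ≤ j) :
    ∀ k, k ≤ r+1 → ∀ p : Fin (r+3) → ℝ, p 0 ≠ 0 →
      (Dop r)^[k] (fun q : Fin (r+3) → ℝ => q 1 / (q 0)^j) p = Hh r j k p := by
  intro k
  induction k with
  | zero =>
    intro _ p hp
    simp only [Function.iterate_zero, _root_.id]
    unfold Hh
    rw [Finset.sum_range_one]
    unfold cc Gg
    rw [dif_pos (by omega : (1:ℕ) < r+3)]
    have hJ : ((Nat.factorial (j-1) : ℝ)) ≠ 0 := Nat.cast_ne_zero.mpr (Nat.factorial_ne_zero _)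
    have h0 : (0+j-0-1 : ℕ) = j-1 := by omega
    rw [h0]
    have hp1 : p 1 = p ⟨1, by omega⟩ := rfl
    have hpow : (p 0)^(((0:ℕ):ℤ) - ((0:ℕ)+(j:ℕ))) = ((p 0)^j)⁻¹ := by
      have he : (((0:ℕ):ℤ) - ((0:ℕ)+(j:ℕ))) = -(j:ℤ) := by push_cast; ring
      rw [he, zpow_neg, zpow_natCast]
    rw [hpow, ← hp1]
    simp [div_self hJ, div_eq_mul_inv]
  | succ k ih =>
    intro hk p hp
    rw [Function.iterate_succ_apply']
    have hopen : IsOpen {q : Fin (r+3) → ℝ | q 0 ≠ 0} :=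
      isOpen_compl_singleton.preimage (continuous_apply 0)
    have hev : (Dop r)^[k] (fun q : Fin (r+3) → ℝ => q 1 / (q 0)^j) =ᶠ[nhds p] Hh r j k := by
      filter_upwards [hopen.mem_nhds hp] with q hq using ih (by omega) q hq
    rw [Dop_congr hev, Dop_Hh r j k hj (by omega) p hp]

/-- for `x ≠ 0`, `(x^{i+j}/(i+j)!) · Dⁱ(z₀ · x^{−j})` equals the polynomial
expression defining `g_{i,j}`; consequently `g_{i,j}` is a polynomial function on all of
`ℝ^{r+3}` which is linear in the variables `z_0, …, z_{r+1}`. -/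
theorem stmt_0 (r i j : ℕ) (hi : 1 ≤ i) (hir : i ≤ r + 1) (hj : 1 ≤ j) :
    (∀ p : Fin (r+3) → ℝ, p 0 ≠ 0 →
      (p 0) ^ (i + j) / (Nat.factorial (i + j) : ℝ) *
        ((Dop r)^[i] (fun q => q 1 / (q 0) ^ j)) p
      = gfun r i j p) ∧
    (∀ (x : ℝ) (z w : Fin (r+2) → ℝ) (c : ℝ),
      gfun r i j (Fin.cons x (c • z + w)) =
        c * gfun r i j (Fin.cons x z) + gfun r i j (Fin.cons x w)) := by
  constructor
  · intro p hp
    rw [key_iter r j hj i hir p hp]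
    unfold Hh gfun
    rw [Fin.sum_univ_eq_sum_range (fun m =>
      (-1 : ℝ) ^ (i - m) * (i.choose m : ℝ) *
      ((Nat.factorial (i + j - m - 1) : ℝ) /
        ((Nat.factorial (j - 1) : ℝ) * (Nat.factorial (i + j) : ℝ))) *
      (p 0) ^ m * (if h : m + 1 < r + 3 then p ⟨m + 1, h⟩ else 0)) (i+1)]
    rw [Finset.mul_sum]
    refine Finset.sum_congr rfl fun m hm => ?_
    simp only [Finset.mem_range] at hm
    have hJ : ((Nat.factorial (j-1) : ℝ)) ≠ 0 := Nat.cast_ne_zero.mpr (Nat.factorial_ne_zero _)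
    have hIJ : ((Nat.factorial (i+j) : ℝ)) ≠ 0 := Nat.cast_ne_zero.mpr (Nat.factorial_ne_zero _)
    have hpow : (p 0)^(i+j) * (p 0)^((m:ℤ)-((i:ℕ)+(j:ℕ))) = (p 0)^(m:ℕ) := by
      rw [← zpow_natCast (p 0) (i+j), ← zpow_add₀ hp, ← zpow_natCast (p 0) m]
      congr 1
      push_cast
      ring
    have h2 : p 0 ^ (i + j) / ((Nat.factorial (i+j) : ℝ)) *
        (cc j i m * Gg r (m+1) p * p 0 ^ ((m:ℤ)-((i:ℕ)+(j:ℕ))))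
        = (cc j i m / (Nat.factorial (i+j) : ℝ)) *
          ((p 0) ^ (i+j) * (p 0) ^ ((m:ℤ)-((i:ℕ)+(j:ℕ)))) * Gg r (m+1) p := by
      ring
    rw [h2, hpow]
    unfold cc Gg
    field_simp
  · intro x z w c
    unfold gfun
    rw [Finset.mul_sum, ← Finset.sum_add_distrib]
    refine Finset.sum_congr rfl fun m _ => ?_
    have hm3 : m.val + 1 < r+3 := by have := m.isLt; omega
    rw [dif_pos hm3, dif_pos hm3, dif_pos hm3]
    have hcons : ∀ v : Fin (r+2) → ℝ,
        (Fin.cons x v : Fin (r+3) → ℝ) ⟨m.val+1, hm3⟩ = v ⟨m.val, by omega⟩ := by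
      intro v
      have : (⟨m.val+1, hm3⟩ : Fin (r+3)) = Fin.succ ⟨m.val, by omega⟩ := rfl
      rw [this, Fin.cons_succ]
    rw [hcons, hcons, hcons]
    have hx : ∀ v : Fin (r+2) → ℝ, (Fin.cons x v : Fin (r+3) → ℝ) 0 = x := by
      intro v; exact Fin.cons_zero (α := fun _ : Fin (r+3) => ℝ) x v
    rw [hx, hx, hx]
    simp only [Pi.add_apply, Pi.smul_apply, smul_eq_mul]
    ring
end

section
/- For all integers r ≥ 0, i with 1 ≤ i ≤ r+1 and j ≥ 1, the identity g_{i,j} − (x/i)·g_{i,j}^{(1)} + j·g_{i−1,j+1} = 0 holds at every point (x, z_0, …, z_{r+1}) ∈ ℝ^{r+3}, where g_{i,j}^{(1)} = ∂g_{i,j}/∂x. -/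
open scoped BigOperators

/-- The coefficient of `x^m z_m` in `g_{i,j}`. -/
noncomputable def coef (i j m : ℕ) : ℝ :=
  (-1 : ℝ) ^ (i - m) * (i.choose m : ℝ) *
    ((Nat.factorial (i + j - m - 1) : ℝ) /
      ((Nat.factorial (j - 1) : ℝ) * (Nat.factorial (i + j) : ℝ)))

lemma gfun_eq (r i j : ℕ) (hir : i ≤ r + 1) :
    gfun r i j = fun p => ∑ m : Fin (i+1),
      coef i j m.val * ((p 0) ^ m.val * p ⟨m.val + 1, by have := m.isLt; omega⟩) := by
  funext p
  refine Finset.sum_congr rfl fun m _ => ?_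
  have hm : m.val + 1 < r + 3 := by have := m.isLt; omega
  rw [dif_pos hm, coef]; ring

lemma gs_one (r i j : ℕ) (hir : i ≤ r + 1) (p : Fin (r+3) → ℝ) :
    gs r i j 1 p = ∑ m : Fin (i+1),
      coef i j m.val * (((m.val : ℝ) * (p 0) ^ (m.val - 1)) * p ⟨m.val + 1, by have := m.isLt; omega⟩) := by
  have H : HasFDerivAt (gfun r i j)
      (∑ m : Fin (i+1), coef i j m.val •
        ((p 0 ^ m.val) • (ContinuousLinearMap.proj ⟨m.val + 1, by have := m.isLt; omega⟩ : (Fin (r+3) → ℝ) →L[ℝ] ℝ) +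
         (p ⟨m.val + 1, by have := m.isLt; omega⟩) • (((m.val : ℝ) * p 0 ^ (m.val - 1)) •
           (ContinuousLinearMap.proj (0 : Fin (r+3)) : (Fin (r+3) → ℝ) →L[ℝ] ℝ)))) p := by
    rw [gfun_eq r i j hir]
    refine HasFDerivAt.fun_sum fun m _ => ?_
    have h1 : HasFDerivAt (fun q : Fin (r+3) → ℝ => (q 0) ^ m.val)
        (((m.val : ℝ) * p 0 ^ (m.val - 1)) •
          (ContinuousLinearMap.proj (0 : Fin (r+3)) : (Fin (r+3) → ℝ) →L[ℝ] ℝ)) p :=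
      (hasDerivAt_pow m.val (p 0)).comp_hasFDerivAt p
        (ContinuousLinearMap.proj (0 : Fin (r+3)) : (Fin (r+3) → ℝ) →L[ℝ] ℝ).hasFDerivAt
    exact (h1.mul (ContinuousLinearMap.proj (⟨m.val + 1, by have := m.isLt; omega⟩ : Fin (r+3)) :
      (Fin (r+3) → ℝ) →L[ℝ] ℝ).hasFDerivAt).const_mul (coef i j m.val)
  have h03 : (0:ℕ) < r + 3 := by omega
  have := H.fderiv
  simp only [gs, Function.iterate_one, pderiv', dif_pos h03, this,
    ContinuousLinearMap.sum_apply, ContinuousLinearMap.smul_apply,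
    ContinuousLinearMap.add_apply, ContinuousLinearMap.proj_apply]
  refine Finset.sum_congr rfl fun m _ => ?_
  have h1 : (Pi.single (⟨0, h03⟩ : Fin (r+3)) (1:ℝ) : Fin (r+3) → ℝ) ⟨m.val + 1, by have := m.isLt; omega⟩ = 0 := by
    rw [Pi.single_apply, if_neg]; exact fun h => Nat.succ_ne_zero _ (congrArg Fin.val h)
  have h2 : (Pi.single (⟨0, h03⟩ : Fin (r+3)) (1:ℝ) : Fin (r+3) → ℝ) 0 = 1 := by
    rw [show (⟨0, h03⟩ : Fin (r+3)) = 0 from rfl, Pi.single_eq_same]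
  rw [h1, h2]
  simp only [smul_eq_mul, mul_zero, zero_add, mul_one]
  ring

lemma choose_mul_sub (n m : ℕ) : (n+1).choose m * (n+1-m) = (n+1) * n.choose m := by
  rw [← Nat.choose_succ_right_eq, Nat.add_one_mul_choose_eq]

lemma key_coef (k j m : ℕ) (hj : 1 ≤ j) (hm : m ≤ k + 1) :
    coef (k+1) j m - ((m : ℝ)/((k+1 : ℕ) : ℝ)) * coef (k+1) j m
      + (j : ℝ) * coef k (j+1) m = 0 := by
  obtain ⟨t, rfl⟩ : ∃ t, j = t + 1 := ⟨j - 1, by omega⟩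
  have hk1 : ((k+1 : ℕ) : ℝ) ≠ 0 := by positivity
  by_cases hmk : m = k + 1
  · subst hmk
    simp only [coef, Nat.choose_eq_zero_of_lt (Nat.lt_succ_self k), Nat.cast_zero,
      mul_zero, zero_mul, zero_div, mul_zero, add_zero, Nat.sub_self, pow_zero,
      Nat.choose_self, Nat.cast_one]
    push_cast
    field_simp
    ring
  · have hm' : m ≤ k := by omega
    have e1 : (k+1) - m = (k - m) + 1 := by omega
    have e2 : (k+1) + (t+1) - m - 1 = k + (t+1+1) - m - 1 := by omega
    have e3 : (k+1) + (t+1) = k + (t+1+1) := by omega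
    have e4 : (t+1) - 1 = t := rfl
    have e5 : (t+1+1) - 1 = t + 1 := rfl
    have hch : (((k+1).choose m : ℝ)) * (((k:ℝ)+1) - (m:ℝ)) = ((k:ℝ)+1) * (k.choose m : ℝ) := by
      have := choose_mul_sub k m
      have hc : ((k+1-m : ℕ) : ℝ) = ((k:ℝ)+1) - m := by push_cast [Nat.cast_sub (by omega : m ≤ k+1)]; ring
      calc (((k+1).choose m : ℝ)) * (((k:ℝ)+1) - (m:ℝ)) = (((k+1).choose m * (k+1-m) : ℕ) : ℝ) := by
            push_cast [hc]; ring
        _ = (((k+1) * k.choose m : ℕ) : ℝ) := by rw [this]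
        _ = ((k:ℝ)+1) * (k.choose m : ℝ) := by push_cast; ring
    simp only [coef, e1, e2, e3, e4, e5, pow_succ]
    have hf1 : ((Nat.factorial t : ℝ)) ≠ 0 := Nat.cast_ne_zero.2 (Nat.factorial_ne_zero t)
    have hf2 : ((Nat.factorial (t+1) : ℝ)) ≠ 0 := Nat.cast_ne_zero.2 (Nat.factorial_ne_zero _)
    have hf3 : ((Nat.factorial (k + (t+1+1)) : ℝ)) ≠ 0 := Nat.cast_ne_zero.2 (Nat.factorial_ne_zero _)
    have hfs : ((Nat.factorial (t+1) : ℝ)) = ((t:ℝ)+1) * (Nat.factorial t : ℝ) := by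
      rw [Nat.factorial_succ]; push_cast; ring
    push_cast
    field_simp
    rw [hfs]
    linear_combination (-(1:ℝ)) * ((t:ℝ)+1) * ((-1:ℝ))^(k-m) * (Nat.factorial (k + (t+1+1) - m - 1) : ℝ) * (Nat.factorial t : ℝ) * hch

lemma coef_id (k j m : ℕ) (hj : 1 ≤ j) (hm : m ≤ k + 1) (x z : ℝ) :
    coef (k+1) j m * (x ^ m * z)
      - (x / ((k+1 : ℕ) : ℝ)) * (coef (k+1) j m * ((m : ℝ) * x ^ (m-1) * z))
      + (j : ℝ) * (coef k (j+1) m * (x ^ m * z)) = 0 := by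
  have hmid : (x / ((k+1 : ℕ) : ℝ)) * (coef (k+1) j m * ((m : ℝ) * x ^ (m-1) * z))
      = ((m : ℝ)/((k+1 : ℕ) : ℝ)) * coef (k+1) j m * (x ^ m * z) := by
    rcases Nat.eq_zero_or_pos m with h0 | h1
    · subst h0; simp
    · have hx : x ^ m = x * x ^ (m-1) := by
        conv_lhs => rw [show m = (m-1)+1 by omega]
        rw [pow_succ]; ring
      rw [hx]; ring
  rw [hmid]
  linear_combination (x ^ m * z) * key_coef k j m hj hm

/-- the identity `g_{i,j} − (x/i)·g_{i,j}^{(1)} + j·g_{i−1,j+1} = 0` holds at every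
point of `ℝ^{r+3}`. -/
theorem stmt_1 (r i j : ℕ) (hi : 1 ≤ i) (hir : i ≤ r + 1) (hj : 1 ≤ j)
    (p : Fin (r+3) → ℝ) :
    gfun r i j p - (p 0 / (i : ℝ)) * gs r i j 1 p + (j : ℝ) * gfun r (i-1) (j+1) p = 0 := by
  obtain ⟨k, rfl⟩ : ∃ k, i = k + 1 := ⟨i - 1, by omega⟩
  have hk : k + 1 ≤ r + 1 := hir
  have hk' : k ≤ r + 1 := by omega
  set z : ℕ → ℝ := fun m => if h : m + 1 < r + 3 then p ⟨m + 1, h⟩ else 0 with hzdef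
  have hz : ∀ (m : ℕ) (h : m + 1 < r + 3), p ⟨m + 1, h⟩ = z m := fun m h => by simp only [hzdef, dif_pos h]
  have H1 : gfun r (k+1) j p = ∑ m ∈ Finset.range (k+2), coef (k+1) j m * ((p 0) ^ m * z m) := by
    rw [gfun_eq r (k+1) j hk,
      ← Fin.sum_univ_eq_sum_range (fun m => coef (k+1) j m * ((p 0) ^ m * z m)) (k+2)]
    exact Finset.sum_congr rfl fun m _ => by rw [hz m.val (by have := m.isLt; omega)]
  have H2 : gs r (k+1) j 1 p
      = ∑ m ∈ Finset.range (k+2), coef (k+1) j m * ((m : ℝ) * (p 0) ^ (m-1) * z m) := by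
    rw [gs_one r (k+1) j hk,
      ← Fin.sum_univ_eq_sum_range (fun m => coef (k+1) j m * ((m : ℝ) * (p 0) ^ (m-1) * z m)) (k+2)]
    exact Finset.sum_congr rfl fun m _ => by rw [hz m.val (by have := m.isLt; omega)]
  have H3 : gfun r (k+1-1) (j+1) p
      = ∑ m ∈ Finset.range (k+2), coef k (j+1) m * ((p 0) ^ m * z m) := by
    have h0 : k + 1 - 1 = k := rfl
    rw [h0, gfun_eq r k (j+1) hk', Finset.sum_range_succ,
      show coef k (j+1) (k+1) = 0 by simp [coef, Nat.choose_eq_zero_of_lt], zero_mul, add_zero,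
      ← Fin.sum_univ_eq_sum_range (fun m => coef k (j+1) m * ((p 0) ^ m * z m)) (k+1)]
    exact Finset.sum_congr rfl fun m _ => by rw [hz m.val (by have := m.isLt; omega)]
  rw [H1, H2, H3, Finset.mul_sum, Finset.mul_sum, ← Finset.sum_sub_distrib,
    ← Finset.sum_add_distrib]
  exact Finset.sum_eq_zero fun m hm =>
    coef_id k j m hj (Nat.lt_succ_iff.mp (Finset.mem_range.mp hm)) (p 0) (z m)
end

section
/- For every integer r ≥ 0 and every 0 ≤ s ≤ r, the function f = g_{r,2}^{(s)} = ∂^s g_{r,2}/∂x^s satisfies D(D f) = 0 identically on ℝ^{r+3} and ∂f/∂z_{r+1} = 0 identically; in particular D²(g_{r,2}) = 0. -/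
open scoped BigOperators

open ContinuousLinearMap

lemma hasFDeriv_pow0 (N k : ℕ) (p : Fin (N+1) → ℝ) :
    HasFDerivAt (fun q : Fin (N+1) → ℝ => (q 0) ^ k)
      (((k : ℝ) * (p 0) ^ (k - 1)) • (proj (0 : Fin (N+1)) : (Fin (N+1) → ℝ) →L[ℝ] ℝ)) p := by
  induction k with
  | zero => simpa using hasFDerivAt_const (1 : ℝ) p
  | succ k ih =>
    have h := ih.fun_mul (hasFDerivAt_apply (0 : Fin (N+1)) p)
    have e : (fun q : Fin (N+1) → ℝ => (q 0) ^ k * q 0)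
        = fun q : Fin (N+1) → ℝ => (q 0) ^ (k+1) := by
      funext q; rw [← pow_succ]
    rw [e] at h
    refine h.congr_fderiv (Eq.symm ?_)
    rw [smul_smul]
    have hc : (((k+1:ℕ)):ℝ) * (p 0)^(k+1-1) = (p 0)^k + p 0 * ((k:ℝ) * (p 0)^(k-1)) := by
      rcases k with _ | k
      · simp
      · simp only [Nat.add_sub_cancel, Nat.cast_add, Nat.cast_one]
        ring
    rw [hc, add_smul]

lemma hasFDeriv_term (N : ℕ) (a : ℝ) (k : ℕ) (i : Fin (N+1)) (p : Fin (N+1) → ℝ) :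
    HasFDerivAt (fun q : Fin (N+1) → ℝ => a * ((q 0) ^ k * q i))
      (a • (((p 0) ^ k) • (proj i : (Fin (N+1) → ℝ) →L[ℝ] ℝ) +
        (p i) • (((k : ℝ) * (p 0) ^ (k - 1)) • (proj (0 : Fin (N+1)) : (Fin (N+1) → ℝ) →L[ℝ] ℝ)))) p :=
  ((hasFDeriv_pow0 N k p).mul (hasFDerivAt_apply i p)).const_mul a

lemma diff_term (N : ℕ) (a : ℝ) (k : ℕ) (i : Fin (N+1)) (p : Fin (N+1) → ℝ) :
    DifferentiableAt ℝ (fun q : Fin (N+1) → ℝ => a * ((q 0) ^ k * q i)) p :=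
  (hasFDeriv_term N a k i p).differentiableAt

lemma pd0_term (N : ℕ) (a : ℝ) (k : ℕ) (i : Fin (N+1)) (hi : i ≠ 0) (p : Fin (N+1) → ℝ) :
    pderiv' (N+1) 0 (fun q => a * ((q 0) ^ k * q i)) p = (a * k) * ((p 0) ^ (k - 1) * p i) := by
  rw [pderiv', dif_pos (Nat.succ_pos N), (hasFDeriv_term N a k i p).fderiv]
  have h0 : (⟨0, Nat.succ_pos N⟩ : Fin (N+1)) = 0 := rfl
  simp only [ContinuousLinearMap.smul_apply, ContinuousLinearMap.add_apply, proj_apply,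
    smul_eq_mul, h0]
  rw [Pi.single_apply, Pi.single_apply, if_neg hi, if_pos rfl]
  ring

lemma pdj_term (N : ℕ) (a : ℝ) (k : ℕ) (i : Fin (N+1)) (j : ℕ) (hj : j < N+1) (hj0 : 0 < j)
    (p : Fin (N+1) → ℝ) :
    pderiv' (N+1) j (fun q => a * ((q 0) ^ k * q i)) p
      = if i.val = j then a * (p 0) ^ k else 0 := by
  rw [pderiv', dif_pos hj, (hasFDeriv_term N a k i p).fderiv]
  simp only [ContinuousLinearMap.smul_apply, ContinuousLinearMap.add_apply, proj_apply,
    smul_eq_mul]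
  rw [Pi.single_apply, Pi.single_apply]
  rw [if_neg (by intro h; have := congrArg Fin.val h; simp at this; omega :
    ¬ ((0 : Fin (N+1)) = ⟨j, hj⟩))]
  by_cases hij : i.val = j
  · rw [if_pos (Fin.ext hij), if_pos hij]; ring
  · rw [if_neg (fun h => hij (congrArg Fin.val h)), if_neg hij]; ring

lemma pderiv'_sum (n j : ℕ) {ι : Type*} (t : Finset ι) (f : ι → (Fin n → ℝ) → ℝ)
    (p : Fin n → ℝ) (hf : ∀ i ∈ t, DifferentiableAt ℝ (f i) p) :
    pderiv' n j (fun q => ∑ i ∈ t, f i q) p = ∑ i ∈ t, pderiv' n j (f i) p := by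
  unfold pderiv'
  split
  · rw [fderiv_fun_sum hf]; simp
  · simp


lemma natId (r s m : ℕ) (hs : s ≤ m) (hm : m + 2 ≤ r + 1) :
    r.choose (m+2) * (r-m-1).factorial * Nat.descFactorial (m+2) (s+2)
      + r.choose m * (r+1-m).factorial * Nat.descFactorial m s
      = 2 * (r.choose (m+1) * (r-m).factorial * Nat.descFactorial (m+1) (s+1)) := by
  have h1 : (m-s).factorial * Nat.descFactorial (m+2) (s+2) = (m+2).factorial := by
    have h := Nat.factorial_mul_descFactorial (n := m+2) (k := s+2) (by omega)
    rwa [show m+2-(s+2) = m-s by omega] at h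
  have h2 : (m-s).factorial * Nat.descFactorial (m+1) (s+1) = (m+1).factorial := by
    have h := Nat.factorial_mul_descFactorial (n := m+1) (k := s+1) (by omega)
    rwa [show m+1-(s+1) = m-s by omega] at h
  have h3 : (m-s).factorial * Nat.descFactorial m s = m.factorial :=
    Nat.factorial_mul_descFactorial hs
  have T1 : r.choose (m+2) * (r-m-1).factorial * (m+2).factorial = (r-m-1) * r.factorial := by
    rcases Nat.lt_or_ge r (m+2) with hlt | hge
    · rw [Nat.choose_eq_zero_of_lt hlt, show r-m-1 = 0 by omega]
      ring
    · have e1 := Nat.choose_mul_factorial_mul_factorial (n := r) (k := m+2) hge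
      rw [show r - (m+2) = r-m-2 by omega] at e1
      calc r.choose (m+2) * (r-m-1).factorial * (m+2).factorial
          = r.choose (m+2) * ((r-m-2)+1).factorial * (m+2).factorial := by
            rw [show r-m-1 = (r-m-2)+1 by omega]
        _ = (r-m-2+1) * (r.choose (m+2) * (m+2).factorial * (r-m-2).factorial) := by
            rw [Nat.factorial_succ]; ring
        _ = (r-m-1) * r.factorial := by rw [e1, show r-m-2+1 = r-m-1 by omega]
  have T2 : r.choose m * (r+1-m).factorial * m.factorial = (r+1-m) * r.factorial := by
    have e2 := Nat.choose_mul_factorial_mul_factorial (n := r) (k := m) (by omega)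
    calc r.choose m * (r+1-m).factorial * m.factorial
        = r.choose m * ((r-m)+1).factorial * m.factorial := by
          rw [show r+1-m = (r-m)+1 by omega]
      _ = (r-m+1) * (r.choose m * m.factorial * (r-m).factorial) := by
          rw [Nat.factorial_succ]; ring
      _ = (r+1-m) * r.factorial := by rw [e2, show r-m+1 = r+1-m by omega]
  have T3 : r.choose (m+1) * (r-m).factorial * (m+1).factorial = (r-m) * r.factorial := by
    rcases Nat.eq_or_lt_of_le hm with heq | hlt
    · have hr : r = m+1 := by omega
      subst hr
      rw [Nat.choose_self, show m+1-m = 1 by omega]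
      simp [Nat.factorial]
    · obtain ⟨q, hq⟩ : ∃ q, r - m = q+1 := ⟨r-m-1, by omega⟩
      have e3 := Nat.choose_mul_factorial_mul_factorial (n := r) (k := m+1) (by omega)
      rw [show r - (m+1) = q by omega] at e3
      rw [hq]
      calc r.choose (m+1) * (q+1).factorial * (m+1).factorial
          = (q+1) * (r.choose (m+1) * (m+1).factorial * q.factorial) := by
            rw [Nat.factorial_succ]; ring
        _ = (q+1) * r.factorial := by rw [e3]
  apply Nat.eq_of_mul_eq_mul_left (Nat.factorial_pos (m-s))
  calc (m-s).factorial * (r.choose (m+2) * (r-m-1).factorial * Nat.descFactorial (m+2) (s+2)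
      + r.choose m * (r+1-m).factorial * Nat.descFactorial m s)
      = r.choose (m+2) * (r-m-1).factorial * ((m-s).factorial * Nat.descFactorial (m+2) (s+2))
        + r.choose m * (r+1-m).factorial * ((m-s).factorial * Nat.descFactorial m s) := by ring
    _ = r.choose (m+2) * (r-m-1).factorial * (m+2).factorial
        + r.choose m * (r+1-m).factorial * m.factorial := by rw [h1, h3]
    _ = (r-m-1) * r.factorial + (r+1-m) * r.factorial := by rw [T1, T2]
    _ = 2 * ((r-m) * r.factorial) := by
        rw [← Nat.add_mul, show (r-m-1) + (r+1-m) = 2*(r-m) by omega]; ring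
    _ = 2 * (r.choose (m+1) * (r-m).factorial * (m+1).factorial) := by rw [T3]
    _ = 2 * (r.choose (m+1) * (r-m).factorial * ((m-s).factorial * Nat.descFactorial (m+1) (s+1))) := by
        rw [h2]
    _ = (m-s).factorial * (2 * (r.choose (m+1) * (r-m).factorial * Nat.descFactorial (m+1) (s+1))) := by
        ring


noncomputable def Acoef (r m : ℕ) : ℝ :=
  (-1)^(r-m) * (r.choose m : ℝ) *
    ((Nat.factorial (r+1-m) : ℝ) / ((Nat.factorial 1 : ℝ) * (Nat.factorial (r+2) : ℝ)))

noncomputable def CC (r t m : ℕ) : ℝ := Acoef r m * (Nat.descFactorial m t : ℝ)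

lemma bracket (r s m : ℕ) (hs : s ≤ m) (hm : m + 2 ≤ r + 1) :
    CC r (s+2) (m+2) + 2 * CC r (s+1) (m+1) + CC r s m = 0 := by
  have H := natId r s m hs hm
  have HR : (r.choose (m+2) : ℝ) * (Nat.factorial (r-m-1) : ℝ) * (Nat.descFactorial (m+2) (s+2) : ℝ)
      + (r.choose m : ℝ) * (Nat.factorial (r+1-m) : ℝ) * (Nat.descFactorial m s : ℝ)
      = 2 * ((r.choose (m+1) : ℝ) * (Nat.factorial (r-m) : ℝ) * (Nat.descFactorial (m+1) (s+1) : ℝ)) := by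
    exact_mod_cast congrArg (Nat.cast (R := ℝ)) H
  unfold CC Acoef
  rcases Nat.lt_or_ge (m+2) (r+1) with hlt | hge
  · -- m+2 ≤ r
    obtain ⟨q, hq⟩ : ∃ q, r - (m+2) = q := ⟨r-(m+2), rfl⟩
    rw [show r-(m+2) = q from hq, show r-(m+1) = q+1 by omega, show r-m = q+2 by omega,
      show r+1-(m+2) = r-m-1 by omega, show r+1-(m+1) = r-m by omega]
    simp only [pow_succ]
    linear_combination ((-1:ℝ)^q / ((Nat.factorial 1 : ℝ) * (Nat.factorial (r+2) : ℝ))) * HR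
  · -- r = m+1
    have hr : r = m+1 := by omega
    subst hr
    simp only [Nat.choose_succ_self, Nat.cast_zero, zero_mul, mul_zero, zero_add] at HR ⊢
    rw [show m+1-m = 1 by omega, show m+1+1-m = 2 by omega] at HR
    rw [show m+1-(m+1) = 0 by omega, show m+1-m = 1 by omega,
      show m+1+1-(m+1) = 1 by omega, show m+1+1-m = 2 by omega]
    simp only [Nat.choose_self, Nat.choose_succ_self_right, pow_zero, pow_one,
      Nat.factorial_one, Nat.cast_one, Nat.cast_ofNat,
      show Nat.factorial 2 = 2 from rfl] at HR ⊢
    linear_combination (-(1:ℝ) / ((Nat.factorial (m+1+2) : ℝ))) * HR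


-- specialized versions at r+3
lemma diff_term3 (r : ℕ) (a : ℝ) (k : ℕ) (i : Fin (r+3)) (p : Fin (r+3) → ℝ) :
    DifferentiableAt ℝ (fun q : Fin (r+3) → ℝ => a * ((q 0) ^ k * q i)) p :=
  diff_term (r+2) a k i p

lemma pd0_term3 (r : ℕ) (a : ℝ) (k : ℕ) (i : Fin (r+3)) (hi : i.val ≠ 0) (p : Fin (r+3) → ℝ) :
    pderiv' (r+3) 0 (fun q => a * ((q 0) ^ k * q i)) p = (a * k) * ((p 0) ^ (k - 1) * p i) :=
  pd0_term (r+2) a k i (fun h => hi (by rw [h]; rfl)) p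

lemma pdj_term3 (r : ℕ) (a : ℝ) (k : ℕ) (i : Fin (r+3)) (j : ℕ) (hj : j < r+3) (hj0 : 0 < j)
    (p : Fin (r+3) → ℝ) :
    pderiv' (r+3) j (fun q => a * ((q 0) ^ k * q i)) p
      = if i.val = j then a * (p 0) ^ k else 0 :=
  pdj_term (r+2) a k i j hj hj0 p

def EE (t : ℕ) : ℕ → ℕ := fun m => m - t

noncomputable def F0 (r : ℕ) (c : ℕ → ℝ) (e : ℕ → ℕ) : (Fin (r+3) → ℝ) → ℝ :=
  fun p => ∑ m : Fin (r+1),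
    c m.val * ((p 0) ^ (e m.val) * p ⟨m.val+1, by have := m.isLt; omega⟩)

noncomputable def F1 (r : ℕ) (c : ℕ → ℝ) (e : ℕ → ℕ) : (Fin (r+3) → ℝ) → ℝ :=
  fun p => ∑ m : Fin (r+1),
    c m.val * ((p 0) ^ (e m.val) * p ⟨m.val+2, by have := m.isLt; omega⟩)

noncomputable def Gf (r : ℕ) (c : ℕ → ℝ) (e : ℕ → ℕ) : (Fin (r+3) → ℝ) → ℝ :=
  fun p => ∑ m : Fin (r+1),
    (if 1 ≤ m.val then c (m.val-1) else 0) *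
      ((p 0) ^ (e (m.val-1)) * p ⟨m.val+2, by have := m.isLt; omega⟩)

lemma diffAt_F0 (r : ℕ) (c : ℕ → ℝ) (e : ℕ → ℕ) (p : Fin (r+3) → ℝ) :
    DifferentiableAt ℝ (F0 r c e) p :=
  DifferentiableAt.fun_sum (fun i _ => diff_term3 r _ _ _ p)

lemma diffAt_F1 (r : ℕ) (c : ℕ → ℝ) (e : ℕ → ℕ) (p : Fin (r+3) → ℝ) :
    DifferentiableAt ℝ (F1 r c e) p :=
  DifferentiableAt.fun_sum (fun i _ => diff_term3 r _ _ _ p)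

lemma pd0_F0 (r : ℕ) (c : ℕ → ℝ) (e : ℕ → ℕ) (p : Fin (r+3) → ℝ) :
    pderiv' (r+3) 0 (F0 r c e) p
      = F0 r (fun m => c m * (e m : ℝ)) (fun m => e m - 1) p := by
  calc pderiv' (r+3) 0 (F0 r c e) p
      = ∑ m : Fin (r+1), pderiv' (r+3) 0
          (fun q => c m.val * ((q 0) ^ (e m.val) * q ⟨m.val+1, by have := m.isLt; omega⟩)) p :=
        pderiv'_sum (r+3) 0 Finset.univ _ p (fun i _ => diff_term3 r _ _ _ p)
    _ = ∑ m : Fin (r+1), (c m.val * (e m.val : ℝ)) *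
          ((p 0) ^ (e m.val - 1) * p ⟨m.val+1, by have := m.isLt; omega⟩) := by
        refine Finset.sum_congr rfl (fun m _ => ?_)
        rw [pd0_term3 r _ _ _ (by simp) p]
    _ = F0 r (fun m => c m * (e m : ℝ)) (fun m => e m - 1) p := rfl

lemma pd0_F1 (r : ℕ) (c : ℕ → ℝ) (e : ℕ → ℕ) (p : Fin (r+3) → ℝ) :
    pderiv' (r+3) 0 (F1 r c e) p
      = F1 r (fun m => c m * (e m : ℝ)) (fun m => e m - 1) p := by
  calc pderiv' (r+3) 0 (F1 r c e) p
      = ∑ m : Fin (r+1), pderiv' (r+3) 0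
          (fun q => c m.val * ((q 0) ^ (e m.val) * q ⟨m.val+2, by have := m.isLt; omega⟩)) p :=
        pderiv'_sum (r+3) 0 Finset.univ _ p (fun i _ => diff_term3 r _ _ _ p)
    _ = ∑ m : Fin (r+1), (c m.val * (e m.val : ℝ)) *
          ((p 0) ^ (e m.val - 1) * p ⟨m.val+2, by have := m.isLt; omega⟩) := by
        refine Finset.sum_congr rfl (fun m _ => ?_)
        rw [pd0_term3 r _ _ _ (by simp) p]
    _ = F1 r (fun m => c m * (e m : ℝ)) (fun m => e m - 1) p := rfl

lemma pdj_F0 (r : ℕ) (c : ℕ → ℝ) (e : ℕ → ℕ) (j : Fin (r+1)) (p : Fin (r+3) → ℝ) :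
    pderiv' (r+3) (j.val+1) (F0 r c e) p = c j.val * (p 0) ^ (e j.val) := by
  calc pderiv' (r+3) (j.val+1) (F0 r c e) p
      = ∑ m : Fin (r+1), pderiv' (r+3) (j.val+1)
          (fun q => c m.val * ((q 0) ^ (e m.val) * q ⟨m.val+1, by have := m.isLt; omega⟩)) p :=
        pderiv'_sum (r+3) (j.val+1) Finset.univ _ p (fun i _ => diff_term3 r _ _ _ p)
    _ = c j.val * (p 0) ^ (e j.val) := by
        rw [Finset.sum_eq_single j]
        · rw [pdj_term3 r _ _ _ _ (by have := j.isLt; omega) (by omega) p, if_pos rfl]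
        · intro b _ hb
          rw [pdj_term3 r _ _ _ _ (by have := j.isLt; omega) (by omega) p, if_neg]
          intro h
          exact hb (Fin.ext (by simpa using h))
        · intro h; exact absurd (Finset.mem_univ j) h

lemma pdj_F1 (r : ℕ) (c : ℕ → ℝ) (e : ℕ → ℕ) (j : Fin (r+1)) (p : Fin (r+3) → ℝ) :
    pderiv' (r+3) (j.val+1) (F1 r c e) p
      = if 1 ≤ j.val then c (j.val-1) * (p 0) ^ (e (j.val-1)) else 0 := by
  calc pderiv' (r+3) (j.val+1) (F1 r c e) p
      = ∑ m : Fin (r+1), pderiv' (r+3) (j.val+1)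
          (fun q => c m.val * ((q 0) ^ (e m.val) * q ⟨m.val+2, by have := m.isLt; omega⟩)) p :=
        pderiv'_sum (r+3) (j.val+1) Finset.univ _ p (fun i _ => diff_term3 r _ _ _ p)
    _ = if 1 ≤ j.val then c (j.val-1) * (p 0) ^ (e (j.val-1)) else 0 := by
        by_cases hj : 1 ≤ j.val
        · rw [if_pos hj, Finset.sum_eq_single (⟨j.val-1, by have := j.isLt; omega⟩ : Fin (r+1))]
          · rw [pdj_term3 r _ _ _ _ (by have := j.isLt; omega) (by omega) p, if_pos (by simp; omega)]
          · intro b _ hb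
            rw [pdj_term3 r _ _ _ _ (by have := j.isLt; omega) (by omega) p, if_neg]
            intro h
            simp only at h
            exact hb (Fin.ext (by simp; omega))
          · intro h; exact absurd (Finset.mem_univ _) h
        · rw [if_neg hj]
          apply Finset.sum_eq_zero
          intro b _
          rw [pdj_term3 r _ _ _ _ (by have := j.isLt; omega) (by omega) p, if_neg]
          simp only
          omega

lemma pderiv'_add (n j : ℕ) (f g : (Fin n → ℝ) → ℝ) (p : Fin n → ℝ)
    (hf : DifferentiableAt ℝ f p) (hg : DifferentiableAt ℝ g p) :
    pderiv' n j (fun q => f q + g q) p = pderiv' n j f p + pderiv' n j g p := by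
  unfold pderiv'
  split
  · rw [fderiv_fun_add hf hg]; simp
  · simp

lemma Dop_add (r : ℕ) (f g : (Fin (r+3) → ℝ) → ℝ)
    (hf : ∀ p, DifferentiableAt ℝ f p) (hg : ∀ p, DifferentiableAt ℝ g p)
    (p : Fin (r+3) → ℝ) :
    Dop r (fun q => f q + g q) p = Dop r f p + Dop r g p := by
  unfold Dop
  rw [pderiv'_add _ _ _ _ _ (hf p) (hg p)]
  have : ∀ m : Fin (r+1),
      p ⟨m.val + 2, by have := m.isLt; omega⟩ *
        pderiv' (r+3) (m.val+1) (fun q => f q + g q) p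
      = p ⟨m.val + 2, by have := m.isLt; omega⟩ * pderiv' (r+3) (m.val+1) f p
        + p ⟨m.val + 2, by have := m.isLt; omega⟩ * pderiv' (r+3) (m.val+1) g p := by
    intro m
    rw [pderiv'_add _ _ _ _ _ (hf p) (hg p), mul_add]
  rw [Finset.sum_congr rfl (fun m _ => this m), Finset.sum_add_distrib]
  ring

lemma Dop_F0 (r : ℕ) (c : ℕ → ℝ) (e : ℕ → ℕ) (p : Fin (r+3) → ℝ) :
    Dop r (F0 r c e) p
      = F0 r (fun m => c m * (e m : ℝ)) (fun m => e m - 1) p + F1 r c e p := by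
  unfold Dop
  rw [pd0_F0]
  congr 1
  refine Finset.sum_congr rfl (fun m _ => ?_)
  rw [pdj_F0]
  ring

lemma Dop_F1 (r : ℕ) (c : ℕ → ℝ) (e : ℕ → ℕ) (p : Fin (r+3) → ℝ) :
    Dop r (F1 r c e) p
      = F1 r (fun m => c m * (e m : ℝ)) (fun m => e m - 1) p + Gf r c e p := by
  unfold Dop
  rw [pd0_F1]
  congr 1
  refine Finset.sum_congr rfl (fun m _ => ?_)
  rw [pdj_F1]
  split_ifs <;> ring

lemma CC_step (r t : ℕ) : (fun m => CC r t m * ((EE t m : ℕ) : ℝ)) = CC r (t+1) := by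
  funext m
  unfold CC EE
  rw [Nat.descFactorial_succ]
  push_cast
  ring

lemma EE_step (t : ℕ) : (fun m => EE t m - 1) = EE (t+1) := by
  funext m; unfold EE; omega

lemma gs_eq (r s : ℕ) : gs r r 2 s = F0 r (CC r s) (EE s) := by
  induction s with
  | zero =>
    show gfun r r 2 = F0 r (CC r 0) (EE 0)
    funext p
    refine Finset.sum_congr rfl (fun m _ => ?_)
    have hm : m.val + 1 < r + 3 := by have := m.isLt; omega
    rw [dif_pos hm]
    unfold CC Acoef EE
    rw [show r + 2 - m.val - 1 = r + 1 - m.val by omega, show (2:ℕ) - 1 = 1 from rfl,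
      Nat.descFactorial_zero, Nat.sub_zero]
    push_cast
    ring
  | succ s ih =>
    have : gs r r 2 (s+1) = pderiv' (r+3) 0 (gs r r 2 s) :=
      Function.iterate_succ_apply' _ _ _
    rw [this, ih]
    funext p
    rw [pd0_F0, CC_step, EE_step]

lemma sum_shift (f : ℕ → ℝ) (N k M : ℕ) (hM : N + k ≤ M) (hlow : ∀ n, n < k → f n = 0)
    (hhigh : ∀ n, N + k ≤ n → f n = 0) :
    (∑ m ∈ Finset.range N, f (m + k)) = ∑ n ∈ Finset.range M, f n := by
  have e1 : ∑ n ∈ Finset.range M, f n = ∑ n ∈ Finset.range (N+k), f n :=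
    (Finset.sum_subset (Finset.range_subset_range.2 hM)
      (fun x _ hx => hhigh x (by simpa using hx))).symm
  have e2 : ∑ n ∈ Finset.Ico 0 k, f n = 0 :=
    Finset.sum_eq_zero (fun x hx => hlow x (by simpa using (Finset.mem_Ico.1 hx).2))
  have e3 : ∑ n ∈ Finset.range (N+k), f n
      = (∑ n ∈ Finset.Ico 0 k, f n) + ∑ n ∈ Finset.Ico k (N+k), f n := by
    rw [Finset.range_eq_Ico,
      ← Finset.sum_Ico_consecutive f (Nat.zero_le k) (by omega : k ≤ N + k)]
  rw [e1, e3, e2, zero_add, Finset.sum_Ico_eq_sum_range, show N + k - k = N by omega]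
  exact Finset.sum_congr rfl (fun m _ => by rw [Nat.add_comm])

noncomputable def ff0 (r s : ℕ) (p : Fin (r+3) → ℝ) (n : ℕ) : ℝ :=
  CC r (s+2) (n-1) * ((p 0) ^ (EE (s+2) (n-1)) * (if h : n < r+3 then p ⟨n, h⟩ else 0))

noncomputable def ff1 (r s : ℕ) (p : Fin (r+3) → ℝ) (n : ℕ) : ℝ :=
  CC r (s+1) (n-2) * ((p 0) ^ (EE (s+1) (n-2)) * (if h : n < r+3 then p ⟨n, h⟩ else 0))

noncomputable def gg2 (r s : ℕ) (p : Fin (r+3) → ℝ) (n : ℕ) : ℝ :=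
  (if 1 ≤ n-2 then CC r s (n-3) else 0) *
    ((p 0) ^ (EE s (n-3)) * (if h : n < r+3 then p ⟨n, h⟩ else 0))

lemma hF0sum (r s : ℕ) (p : Fin (r+3) → ℝ) :
    F0 r (CC r (s+2)) (EE (s+2)) p = ∑ n ∈ Finset.range (r+4), ff0 r s p n := by
  have e1 : F0 r (CC r (s+2)) (EE (s+2)) p = ∑ m ∈ Finset.range (r+1), ff0 r s p (m+1) := by
    unfold F0
    rw [← Fin.sum_univ_eq_sum_range (fun m => ff0 r s p (m+1)) (r+1)]
    refine Finset.sum_congr rfl (fun m _ => ?_)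
    unfold ff0
    rw [Nat.add_sub_cancel, dif_pos (by have := m.isLt; omega : m.val + 1 < r+3)]
  rw [e1]
  apply sum_shift _ (r+1) 1 (r+4) (by omega)
  · intro n hn
    interval_cases n
    simp [ff0, CC, Nat.zero_descFactorial_succ]
  · intro n hn
    rcases Nat.lt_or_ge n (r+3) with h | h
    · have : r.choose (n-1) = 0 := Nat.choose_eq_zero_of_lt (by omega)
      simp [ff0, CC, Acoef, this]
    · simp [ff0, dif_neg (by omega : ¬ n < r+3)]

lemma hF1sum (r s : ℕ) (p : Fin (r+3) → ℝ) :
    F1 r (CC r (s+1)) (EE (s+1)) p = ∑ n ∈ Finset.range (r+4), ff1 r s p n := by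
  have e1 : F1 r (CC r (s+1)) (EE (s+1)) p = ∑ m ∈ Finset.range (r+1), ff1 r s p (m+2) := by
    unfold F1
    rw [← Fin.sum_univ_eq_sum_range (fun m => ff1 r s p (m+2)) (r+1)]
    refine Finset.sum_congr rfl (fun m _ => ?_)
    unfold ff1
    rw [Nat.add_sub_cancel, dif_pos (by have := m.isLt; omega : m.val + 2 < r+3)]
  rw [e1]
  apply sum_shift _ (r+1) 2 (r+4) (by omega)
  · intro n hn
    interval_cases n <;> simp [ff1, CC, Nat.zero_descFactorial_succ]
  · intro n hn
    simp [ff1, dif_neg (by omega : ¬ n < r+3)]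

lemma hGsum (r s : ℕ) (p : Fin (r+3) → ℝ) :
    Gf r (CC r s) (EE s) p = ∑ n ∈ Finset.range (r+4), gg2 r s p n := by
  have e1 : Gf r (CC r s) (EE s) p = ∑ m ∈ Finset.range (r+1), gg2 r s p (m+2) := by
    unfold Gf
    rw [← Fin.sum_univ_eq_sum_range (fun m => gg2 r s p (m+2)) (r+1)]
    refine Finset.sum_congr rfl (fun m _ => ?_)
    unfold gg2
    rw [Nat.add_sub_cancel, show m.val + 2 - 3 = m.val - 1 by omega,
      dif_pos (by have := m.isLt; omega : m.val + 2 < r+3)]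
  rw [e1]
  apply sum_shift _ (r+1) 2 (r+4) (by omega)
  · intro n hn
    interval_cases n <;> simp [gg2]
  · intro n hn
    simp [gg2, dif_neg (by omega : ¬ n < r+3)]

lemma final_lemma (r s : ℕ) (p : Fin (r+3) → ℝ) :
    F0 r (CC r (s+2)) (EE (s+2)) p + F1 r (CC r (s+1)) (EE (s+1)) p
      + (F1 r (CC r (s+1)) (EE (s+1)) p + Gf r (CC r s) (EE s) p) = 0 := by
  rw [hF0sum, hF1sum, hGsum, ← Finset.sum_add_distrib, ← Finset.sum_add_distrib,
    ← Finset.sum_add_distrib]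
  apply Finset.sum_eq_zero
  intro n hn
  have hn4 : n < r + 4 := Finset.mem_range.1 hn
  rcases Nat.lt_or_ge n (r+3) with hlt | hge
  · rcases Nat.lt_or_ge (s+2) n with hbig | hsmall
    · -- n ≥ s+3, n ≤ r+2
      obtain ⟨m, rfl⟩ : ∃ m, n = m + 3 := ⟨n - 3, by omega⟩
      have hsm : s ≤ m := by omega
      have hmr : m + 2 ≤ r + 1 := by omega
      unfold ff0 ff1 gg2 EE
      rw [show m + 3 - 1 = m + 2 by omega, show m + 3 - 2 = m + 1 by omega,
        show m + 3 - 3 = m by omega, show m + 2 - (s + 2) = m - s by omega,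
        show m + 1 - (s + 1) = m - s by omega, if_pos (by omega : 1 ≤ m + 1),
        dif_pos hlt]
      have hb := bracket r s m hsm hmr
      linear_combination ((p 0) ^ (m - s) * p ⟨m+3, hlt⟩) * hb
    · -- n ≤ s+2 : all coefficients vanish
      have d1 : Nat.descFactorial (n-1) (s+2) = 0 := Nat.descFactorial_of_lt (by omega)
      have d2 : Nat.descFactorial (n-2) (s+1) = 0 := Nat.descFactorial_of_lt (by omega)
      rcases Nat.lt_or_ge n 3 with h3 | h3
      · unfold ff0 ff1 gg2 CC
        rw [if_neg (by omega : ¬ 1 ≤ n - 2), d1, d2]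
        simp
      · have d3 : Nat.descFactorial (n-3) s = 0 := Nat.descFactorial_of_lt (by omega)
        unfold ff0 ff1 gg2 CC
        rw [d1, d2, d3]
        simp
  · -- n ≥ r+3 : the variable itself is out of range
    unfold ff0 ff1 gg2
    rw [dif_neg (by omega : ¬ n < r+3)]
    simp

/-- for `0 ≤ s ≤ r` the function `f = g_{r,2}^{(s)}` satisfies `D(Df) = 0` and
`∂f/∂z_{r+1} = 0` identically on `ℝ^{r+3}` (coordinate `r+2` is `z_{r+1}`); in particular
(the case `s = 0`) `D²(g_{r,2}) = 0`. -/
theorem stmt_2 (r s : ℕ) (hs : s ≤ r) :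
    (∀ p : Fin (r+3) → ℝ, Dop r (Dop r (gs r r 2 s)) p = 0) ∧
    (∀ p : Fin (r+3) → ℝ, pderiv' (r+3) (r+2) (gs r r 2 s) p = 0) := by
  constructor
  · intro p
    have hD1 : Dop r (gs r r 2 s)
        = fun q => F0 r (CC r (s+1)) (EE (s+1)) q + F1 r (CC r s) (EE s) q := by
      funext q
      rw [gs_eq, Dop_F0, CC_step, EE_step]
    rw [hD1, Dop_add r _ _ (diffAt_F0 r _ _) (diffAt_F1 r _ _) p,
      Dop_F0, Dop_F1, CC_step, EE_step, CC_step, EE_step]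
    exact final_lemma r s p
  · intro p
    rw [gs_eq]
    calc pderiv' (r+3) (r+2) (F0 r (CC r s) (EE s)) p
        = ∑ m : Fin (r+1), pderiv' (r+3) (r+2)
            (fun q => CC r s m.val *
              ((q 0) ^ (EE s m.val) * q ⟨m.val+1, by have := m.isLt; omega⟩)) p :=
          pderiv'_sum (r+3) (r+2) Finset.univ _ p (fun i _ => diff_term3 r _ _ _ p)
      _ = 0 := by
          apply Finset.sum_eq_zero
          intro m _
          rw [pdj_term3 r _ _ _ _ (by omega) (by omega) p, if_neg]
          simp only
          have := m.isLt
          omega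
end

section
/- Let r ≥ 0 and let f : ℝ^{r+3} → ℝ be smooth with D(Df) = 0 identically and ∂f/∂z_{r+1} = 0 identically. Then ∂²f/∂z_i∂z_j = 0 identically for all 0 ≤ i, j ≤ r+1; that is, f is an affine-linear function of the variables z_0, …, z_{r+1} (with coefficients depending on x). -/
open scoped BigOperators

namespace Tool

lemma wt_one_le : (1 : WithTop ℕ∞) ≤ ((⊤:ℕ∞) : WithTop ℕ∞) := by
  exact_mod_cast (le_top : (1:ℕ∞) ≤ ⊤)

lemma wt_add_one_le : ((⊤:ℕ∞) : WithTop ℕ∞) + 1 ≤ ((⊤:ℕ∞) : WithTop ℕ∞) := by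
  exact_mod_cast (by simp : (⊤:ℕ∞) + 1 ≤ ⊤)

lemma wt_two_le : (2 : WithTop ℕ∞) ≤ ((⊤:ℕ∞) : WithTop ℕ∞) := by
  have : ((2:ℕ∞) : WithTop ℕ∞) ≤ ((⊤:ℕ∞) : WithTop ℕ∞) := by
    exact_mod_cast (le_top : (2:ℕ∞) ≤ ⊤)
  simpa using this

lemma wt_ne_zero : ((⊤:ℕ∞) : WithTop ℕ∞) ≠ 0 :=
  ne_of_gt (lt_of_lt_of_le zero_lt_one wt_one_le)

end Tool

namespace Tool

variable {n : ℕ}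

lemma pd_smooth {g : (Fin n → ℝ) → ℝ} (hg : ContDiff ℝ (⊤:ℕ∞) g) (k : ℕ) :
    ContDiff ℝ (⊤:ℕ∞) (pderiv' n k g) := by
  unfold pderiv'
  by_cases h : k < n
  · simp only [dif_pos h]
    exact (hg.fderiv_right wt_add_one_le).clm_apply contDiff_const
  · simp only [dif_neg h]; exact contDiff_const

lemma pd_zero (k : ℕ) (p : Fin n → ℝ) : pderiv' n k (fun _ => (0:ℝ)) p = 0 := by
  unfold pderiv'
  split
  · rw [fderiv_const_apply]; simp
  · rfl

lemma pd_congr {g h : (Fin n → ℝ) → ℝ} (hgh : ∀ q, g q = h q) (k : ℕ) :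
    pderiv' n k g = pderiv' n k h := by
  have : g = h := funext hgh
  rw [this]

lemma pd_sum {ι : Type*} (s : Finset ι) (F : ι → (Fin n → ℝ) → ℝ)
    (hF : ∀ i ∈ s, ContDiff ℝ (⊤:ℕ∞) (F i)) (k : ℕ) (p : Fin n → ℝ) :
    pderiv' n k (fun q => ∑ i ∈ s, F i q) p = ∑ i ∈ s, pderiv' n k (F i) p := by
  unfold pderiv'
  split
  · rw [fderiv_fun_sum (fun i hi => ((hF i hi).differentiable wt_ne_zero).differentiableAt)]
    simp
  · simp

lemma pd_const_mul {g : (Fin n → ℝ) → ℝ} (hg : ContDiff ℝ (⊤:ℕ∞) g) (c : ℝ) (k : ℕ)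
    (p : Fin n → ℝ) :
    pderiv' n k (fun q => c * g q) p = c * pderiv' n k g p := by
  unfold pderiv'
  split
  · rw [fderiv_const_mul ((hg.differentiable wt_ne_zero).differentiableAt)]; simp
  · simp

lemma pd_add {g h : (Fin n → ℝ) → ℝ} (hg : ContDiff ℝ (⊤:ℕ∞) g) (hh : ContDiff ℝ (⊤:ℕ∞) h)
    (k : ℕ) (p : Fin n → ℝ) :
    pderiv' n k (fun q => g q + h q) p = pderiv' n k g p + pderiv' n k h p := by
  unfold pderiv'
  split
  · rw [fderiv_fun_add ((hg.differentiable wt_ne_zero).differentiableAt)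
      ((hh.differentiable wt_ne_zero).differentiableAt)]
    simp
  · simp

lemma pd_coord_mul {g : (Fin n → ℝ) → ℝ} (hg : ContDiff ℝ (⊤:ℕ∞) g) (j : Fin n) (k : ℕ)
    (p : Fin n → ℝ) :
    pderiv' n k (fun q => q j * g q) p
      = (if (j:ℕ) = k then g p else 0) + p j * pderiv' n k g p := by
  unfold pderiv'
  split
  · rename_i h
    have hcoord : DifferentiableAt ℝ (fun q : Fin n → ℝ => q j) p :=
      (ContinuousLinearMap.proj j : (Fin n → ℝ) →L[ℝ] ℝ).differentiableAt
    rw [fderiv_fun_mul hcoord ((hg.differentiable wt_ne_zero).differentiableAt)]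
    have hfd : fderiv ℝ (fun q : Fin n → ℝ => q j) p
        = (ContinuousLinearMap.proj j : (Fin n → ℝ) →L[ℝ] ℝ) :=
      (ContinuousLinearMap.proj j : (Fin n → ℝ) →L[ℝ] ℝ).fderiv
    rw [hfd]
    simp only [ContinuousLinearMap.add_apply, ContinuousLinearMap.smul_apply,
      ContinuousLinearMap.proj_apply, smul_eq_mul]
    have : (Pi.single (⟨k, h⟩ : Fin n) (1:ℝ) : Fin n → ℝ) j = if (j:ℕ) = k then 1 else 0 := by
      rw [Pi.single_apply]
      congr 1
      simp [Fin.ext_iff, eq_comm]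
    rw [this]
    by_cases hjk : (j:ℕ) = k <;> simp [hjk] <;> ring
  · rename_i h
    have : ¬ ((j:ℕ) = k) := by
      intro heq; exact h (heq ▸ j.isLt)
    simp [this]

lemma pd_comm {g : (Fin n → ℝ) → ℝ} (hg : ContDiff ℝ (⊤:ℕ∞) g) (k l : ℕ) (p : Fin n → ℝ) :
    pderiv' n k (pderiv' n l g) p = pderiv' n l (pderiv' n k g) p := by
  by_cases hk : k < n
  · by_cases hl : l < n
    · have hdiff : Differentiable ℝ g := hg.differentiable wt_ne_zero
      have hfd : Differentiable ℝ (fderiv ℝ g) :=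
        (hg.fderiv_right wt_add_one_le).differentiable wt_ne_zero
      have key : ∀ (a b : ℕ) (ha : a < n) (hb : b < n),
          pderiv' n a (pderiv' n b g) p
            = fderiv ℝ (fderiv ℝ g) p (Pi.single (⟨a, ha⟩ : Fin n) 1)
                (Pi.single (⟨b, hb⟩ : Fin n) 1) := by
        intro a b ha hb
        have h1 : pderiv' n b g = fun q => (fderiv ℝ g q) (Pi.single (⟨b, hb⟩ : Fin n) 1) := by
          funext q; unfold pderiv'; rw [dif_pos hb]
        rw [h1]
        unfold pderiv'
        rw [dif_pos ha]
        rw [fderiv_clm_apply (hfd.differentiableAt) (differentiableAt_const _)]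
        simp
      rw [key k l hk hl, key l k hl hk]
      have hsym : IsSymmSndFDerivAt ℝ g p := by
        apply ContDiffAt.isSymmSndFDerivAt (n := ((⊤:ℕ∞) : WithTop ℕ∞)) hg.contDiffAt
        simpa [minSmoothness_of_isRCLikeNormedField] using wt_two_le
      exact hsym _ _
    · have h1 : pderiv' n l g = fun _ => (0:ℝ) := by
        funext q; unfold pderiv'; rw [dif_neg hl]
      rw [h1, pd_zero]
      unfold pderiv'
      rw [dif_neg hl]
  · have h1 : pderiv' n k g = fun _ => (0:ℝ) := by
      funext q; unfold pderiv'; rw [dif_neg hk]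
    rw [h1, pd_zero]
    conv_lhs => unfold pderiv'
    rw [dif_neg hk]

end Tool

namespace Tool

section PartB
variable {r : ℕ}

lemma Dop_apply (g : (Fin (r+3) → ℝ) → ℝ) (p : Fin (r+3) → ℝ) :
    Dop r g p = pderiv' (r+3) 0 g p +
      ∑ m : Fin (r+1), p ⟨m.val + 2, by omega⟩ * pderiv' (r+3) (m.val + 1) g p := rfl

lemma coord_smooth (j : Fin (r+3)) : ContDiff ℝ (⊤:ℕ∞) (fun q : Fin (r+3) → ℝ => q j) :=
  (ContinuousLinearMap.proj j : (Fin (r+3) → ℝ) →L[ℝ] ℝ).contDiff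

lemma Dop_smooth {g : (Fin (r+3) → ℝ) → ℝ} (hg : ContDiff ℝ (⊤:ℕ∞) g) :
    ContDiff ℝ (⊤:ℕ∞) (Dop r g) := by
  unfold Dop
  exact (pd_smooth hg 0).add (ContDiff.sum (fun m _ =>
    (coord_smooth _).mul (pd_smooth hg (m.val+1))))

lemma iter_Dop_smooth {g : (Fin (r+3) → ℝ) → ℝ} (hg : ContDiff ℝ (⊤:ℕ∞) g) (m : ℕ) :
    ContDiff ℝ (⊤:ℕ∞) ((Dop r)^[m] g) := by
  induction m generalizing g with
  | zero => exact hg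
  | succ m ih => rw [Function.iterate_succ_apply]; exact ih (Dop_smooth hg)

lemma Dop_zero (p : Fin (r+3) → ℝ) : Dop r (fun _ => (0:ℝ)) p = 0 := by
  rw [Dop_apply]
  simp [pd_zero]

lemma iter_Dop_zero (m : ℕ) (p : Fin (r+3) → ℝ) : (Dop r)^[m] (fun _ => (0:ℝ)) p = 0 := by
  induction m generalizing p with
  | zero => rfl
  | succ m ih =>
    rw [Function.iterate_succ_apply']
    have : (Dop r)^[m] (fun _ => (0:ℝ)) = fun _ => (0:ℝ) := funext fun q => ih q
    rw [this, Dop_zero]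

lemma iter_Dop_of_zero {g : (Fin (r+3) → ℝ) → ℝ} (hg : ∀ q, g q = 0) (m : ℕ)
    (p : Fin (r+3) → ℝ) : (Dop r)^[m] g p = 0 := by
  have : g = fun _ => (0:ℝ) := funext hg
  rw [this, iter_Dop_zero]

lemma Dop_sum_mul {ι : Type} (s : Finset ι) (c : ι → ℝ) (F : ι → (Fin (r+3) → ℝ) → ℝ)
    (hF : ∀ i ∈ s, ContDiff ℝ (⊤:ℕ∞) (F i)) (p : Fin (r+3) → ℝ) :
    Dop r (fun q => ∑ i ∈ s, c i * F i q) p = ∑ i ∈ s, c i * Dop r (F i) p := by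
  have hcF : ∀ i ∈ s, ContDiff ℝ (⊤:ℕ∞) (fun q => c i * F i q) := fun i hi =>
    contDiff_const.mul (hF i hi)
  have key : ∀ k : ℕ, pderiv' (r+3) k (fun q => ∑ i ∈ s, c i * F i q) p
      = ∑ i ∈ s, c i * pderiv' (r+3) k (F i) p := by
    intro k
    rw [pd_sum s _ hcF k p]
    exact Finset.sum_congr rfl fun i hi => pd_const_mul (hF i hi) (c i) k p
  rw [Dop_apply]
  rw [key 0]
  have : ∀ m : Fin (r+1), p ⟨m.val + 2, by omega⟩ *
      pderiv' (r+3) (m.val + 1) (fun q => ∑ i ∈ s, c i * F i q) p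
      = ∑ i ∈ s, c i * (p ⟨m.val + 2, by omega⟩ * pderiv' (r+3) (m.val + 1) (F i) p) := by
    intro m
    rw [key (m.val+1), Finset.mul_sum]
    exact Finset.sum_congr rfl fun i _ => by ring
  rw [Finset.sum_congr rfl (fun m _ => this m), Finset.sum_comm]
  rw [← Finset.sum_add_distrib]
  exact Finset.sum_congr rfl fun i _ => by rw [Dop_apply, mul_add, Finset.mul_sum]

lemma pd_Dop_comm {g : (Fin (r+3) → ℝ) → ℝ} (hg : ContDiff ℝ (⊤:ℕ∞) g) {k : ℕ}
    (hk : k ≤ r+2) (p : Fin (r+3) → ℝ) :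
    pderiv' (r+3) k (Dop r g) p = Dop r (pderiv' (r+3) k g) p
      + (if 2 ≤ k then pderiv' (r+3) (k-1) g p else 0) := by
  have hterm : ∀ m : Fin (r+1), ContDiff ℝ (⊤:ℕ∞)
      (fun q : Fin (r+3) → ℝ => q ⟨m.val+2, by omega⟩ * pderiv' (r+3) (m.val+1) g q) :=
    fun m => (coord_smooth _).mul (pd_smooth hg _)
  have step1 : pderiv' (r+3) k (Dop r g) p
      = pderiv' (r+3) k (pderiv' (r+3) 0 g) p
        + ∑ m : Fin (r+1), ((if ((⟨m.val+2, by omega⟩ : Fin (r+3)) : ℕ) = k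
            then pderiv' (r+3) (m.val+1) g p else 0)
          + p ⟨m.val+2, by omega⟩ * pderiv' (r+3) k (pderiv' (r+3) (m.val+1) g) p) := by
    have : Dop r g = fun q => pderiv' (r+3) 0 g q +
        ∑ m : Fin (r+1), q ⟨m.val + 2, by omega⟩ * pderiv' (r+3) (m.val + 1) g q := rfl
    rw [this]
    rw [pd_add (pd_smooth hg 0) (ContDiff.sum (fun m _ => hterm m)) k p]
    congr 1
    rw [pd_sum _ _ (fun m _ => hterm m) k p]
    exact Finset.sum_congr rfl fun m _ => pd_coord_mul (pd_smooth hg _) _ k p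
  rw [step1, Finset.sum_add_distrib]
  have hsingle : ∑ m : Fin (r+1), (if ((⟨m.val+2, by omega⟩ : Fin (r+3)) : ℕ) = k
      then pderiv' (r+3) (m.val+1) g p else 0)
      = (if 2 ≤ k then pderiv' (r+3) (k-1) g p else 0) := by
    by_cases h2 : 2 ≤ k
    · rw [if_pos h2]
      have hm0 : k - 2 < r + 1 := by omega
      rw [Finset.sum_eq_single_of_mem (⟨k-2, hm0⟩ : Fin (r+1)) (Finset.mem_univ _)]
      · rw [if_pos (by simp only [Fin.val_mk]; omega)]
        congr 1
        simp only [Fin.val_mk]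
        omega
      · intro b _ hb
        rw [if_neg]
        intro hbk
        simp only [Fin.val_mk] at hbk
        apply hb
        apply Fin.ext
        simp only [Fin.val_mk]
        omega
    · rw [if_neg h2]
      apply Finset.sum_eq_zero
      intro m _
      rw [if_neg (by simp; omega)]
  rw [hsingle, Dop_apply]
  have hcomm0 : pderiv' (r+3) k (pderiv' (r+3) 0 g) p
      = pderiv' (r+3) 0 (pderiv' (r+3) k g) p := pd_comm hg k 0 p
  have hcommm : ∀ m : Fin (r+1), pderiv' (r+3) k (pderiv' (r+3) (m.val+1) g) p
      = pderiv' (r+3) (m.val+1) (pderiv' (r+3) k g) p := fun m => pd_comm hg k _ p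
  rw [hcomm0]
  rw [Finset.sum_congr rfl (fun m _ => by rw [hcommm m])]
  ring


end PartB

section PartC
variable {r : ℕ}
lemma expand {g : (Fin (r+3) → ℝ) → ℝ} (hg : ContDiff ℝ (⊤:ℕ∞) g) :
    ∀ (m : ℕ) {q : ℕ}, q ≤ r+1 → ∀ p : Fin (r+3) → ℝ,
    pderiv' (r+3) (q+1) ((Dop r)^[m] g) p
      = ∑ i ∈ Finset.range (q+1),
          (m.choose i : ℝ) * (Dop r)^[m-i] (pderiv' (r+3) (q+1-i) g) p := by
  intro m
  induction m with
  | zero =>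
    intro q hq p
    rw [Finset.sum_eq_single_of_mem 0 (Finset.mem_range.mpr (by omega))]
    · simp
    · intro i _ hi
      rw [Nat.choose_eq_zero_of_lt (by omega)]
      simp
  | succ m ih =>
    intro q hq p
    have hsm : ContDiff ℝ (⊤:ℕ∞) ((Dop r)^[m] g) := iter_Dop_smooth hg m
    rw [Function.iterate_succ_apply']
    rw [pd_Dop_comm hsm (by omega) p]
    have hIH : pderiv' (r+3) (q+1) ((Dop r)^[m] g)
        = fun p' => ∑ i ∈ Finset.range (q+1),
            (m.choose i : ℝ) * (Dop r)^[m-i] (pderiv' (r+3) (q+1-i) g) p' :=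
      funext fun p' => ih hq p'
    have hfirst : Dop r (pderiv' (r+3) (q+1) ((Dop r)^[m] g)) p
        = ∑ i ∈ Finset.range (q+1),
            (m.choose i : ℝ) * (Dop r)^[m+1-i] (pderiv' (r+3) (q+1-i) g) p := by
      rw [hIH, Dop_sum_mul _ _ _ (fun i _ => iter_Dop_smooth (pd_smooth hg _) _) p]
      apply Finset.sum_congr rfl
      intro i hi
      by_cases him : i ≤ m
      · have h1 : m + 1 - i = (m - i) + 1 := by omega
        rw [h1, Function.iterate_succ_apply']
      · rw [Nat.choose_eq_zero_of_lt (by omega)]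
        simp
    have hsecond : (if 2 ≤ q+1 then pderiv' (r+3) (q+1-1) ((Dop r)^[m] g) p else 0)
        = ∑ i ∈ Finset.range q,
            (m.choose i : ℝ) * (Dop r)^[m+1-(i+1)] (pderiv' (r+3) (q+1-(i+1)) g) p := by
      by_cases hq1 : 1 ≤ q
      · rw [if_pos (by omega)]
        have h2 : q + 1 - 1 = (q - 1) + 1 := by omega
        rw [h2, ih (by omega) p]
        have hrange : q - 1 + 1 = q := by omega
        rw [hrange]
        apply Finset.sum_congr rfl
        intro i hi
        simp [Nat.succ_sub_succ]
      · have hq0 : q = 0 := by omega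
        subst hq0
        simp
    rw [hfirst, hsecond]
    rw [Finset.sum_range_succ' _ q]
    conv_rhs => rw [Finset.sum_range_succ' _ q]
    have hps : ∀ i, ((m+1).choose (i+1) : ℝ) = (m.choose i : ℝ) + (m.choose (i+1) : ℝ) := by
      intro i
      rw [Nat.choose_succ_succ]
      push_cast
      ring
    have : ∑ i ∈ Finset.range q, ((m+1).choose (i+1) : ℝ)
              * (Dop r)^[m+1-(i+1)] (pderiv' (r+3) (q+1-(i+1)) g) p
        = ∑ i ∈ Finset.range q, ((m.choose (i+1) : ℝ)
              * (Dop r)^[m+1-(i+1)] (pderiv' (r+3) (q+1-(i+1)) g) p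
            + (m.choose i : ℝ) * (Dop r)^[m+1-(i+1)] (pderiv' (r+3) (q+1-(i+1)) g) p) := by
      apply Finset.sum_congr rfl
      intro i _
      rw [hps i]
      ring
    rw [this, Finset.sum_add_distrib]
    simp only [Nat.choose_zero_right, Nat.cast_one]
    ring

end PartC

section PartD
/-- `XX r f a b = ∂²f/∂z_a∂z_b`. -/
noncomputable def XX (r : ℕ) (f : (Fin (r+3) → ℝ) → ℝ) (a b : ℕ) : (Fin (r+3) → ℝ) → ℝ :=
  pderiv' (r+3) (a+1) (pderiv' (r+3) (b+1) f)

variable {r : ℕ} {f : (Fin (r+3) → ℝ) → ℝ}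

lemma pd_out {n : ℕ} (g : (Fin n → ℝ) → ℝ) {k : ℕ} (hk : n ≤ k) (p : Fin n → ℝ) :
    pderiv' n k g p = 0 := by
  unfold pderiv'
  rw [dif_neg (by omega)]

lemma pdf_high (hz : ∀ p, pderiv' (r+3) (r+2) f p = 0) {b : ℕ} (hb : r+1 ≤ b)
    (q : Fin (r+3) → ℝ) : pderiv' (r+3) (b+1) f q = 0 := by
  rcases eq_or_lt_of_le hb with h | h
  · rw [← h]; exact hz q
  · exact pd_out f (by omega) q

lemma Xtriv (hf : ContDiff ℝ (⊤:ℕ∞) f) (hz : ∀ p, pderiv' (r+3) (r+2) f p = 0)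
    {a b : ℕ} (hab : r+1 ≤ a ∨ r+1 ≤ b) (q : Fin (r+3) → ℝ) : XX r f a b q = 0 := by
  rcases hab with h | h
  · unfold XX
    rcases eq_or_lt_of_le h with h' | h'
    · rw [pd_comm hf (a+1) (b+1) q]
      have : pderiv' (r+3) (a+1) f = fun _ => (0:ℝ) := by
        funext q'
        exact pdf_high hz (le_of_eq h') q'
      rw [this, pd_zero]
    · exact pd_out _ (by omega) q
  · unfold XX
    have : pderiv' (r+3) (b+1) f = fun _ => (0:ℝ) :=
      funext fun q' => pdf_high hz h q'
    rw [this]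
    exact pd_zero _ q

lemma D2f_zero (hD : ∀ p, Dop r (Dop r f) p = 0) : (Dop r)^[2] f = fun _ => (0:ℝ) := by
  funext q
  rw [Function.iterate_succ_apply', Function.iterate_one]
  exact hD q

/-- the key relation at level `S`. -/
lemma rel (hf : ContDiff ℝ (⊤:ℕ∞) f) (hD : ∀ p, Dop r (Dop r f) p = 0)
    {S : ℕ} (H : ∀ a b, S < a + b → ∀ q, XX r f a b q = 0)
    {k1 k2 : ℕ} (hk1 : k1 ≤ r+1) (hk2 : k2 ≤ r+1) (hS : k1 + k2 = S + 2)
    (p : Fin (r+3) → ℝ) :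
    (if 2 ≤ k1 then XX r f (k1-2) k2 p else 0)
      + (if 1 ≤ k1 ∧ 1 ≤ k2 then 2 * XX r f (k1-1) (k2-1) p else 0)
      + (if 2 ≤ k2 then XX r f k1 (k2-2) p else 0) = 0 := by
  have hzero : pderiv' (r+3) (k1+1) (pderiv' (r+3) (k2+1) ((Dop r)^[2] f)) p = 0 := by
    rw [D2f_zero hD]
    have h1 : pderiv' (r+3) (k2+1) (fun _ : Fin (r+3) → ℝ => (0:ℝ)) = fun _ => (0:ℝ) :=
      funext fun q => pd_zero _ q
    rw [h1]
    exact pd_zero _ p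
  have hstep1 : pderiv' (r+3) (k2+1) ((Dop r)^[2] f)
      = fun p' => ∑ i ∈ Finset.range (k2+1),
          ((2:ℕ).choose i : ℝ) * (Dop r)^[2-i] (pderiv' (r+3) (k2+1-i) f) p' :=
    funext fun p' => expand hf 2 hk2 p'
  have hstep2 : pderiv' (r+3) (k1+1) (pderiv' (r+3) (k2+1) ((Dop r)^[2] f)) p
      = ∑ i ∈ Finset.range (k2+1), ((2:ℕ).choose i : ℝ) *
          ∑ j ∈ Finset.range (k1+1), (((2:ℕ)-i).choose j : ℝ) *
            (Dop r)^[2-i-j] (pderiv' (r+3) (k1+1-j) (pderiv' (r+3) (k2+1-i) f)) p := by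
    rw [hstep1]
    rw [pd_sum _ _ (fun i _ => contDiff_const.mul (iter_Dop_smooth (pd_smooth hf _) _)) _ p]
    apply Finset.sum_congr rfl
    intro i hi
    rw [pd_const_mul (iter_Dop_smooth (pd_smooth hf _) _) _ _ p]
    congr 1
    exact expand (pd_smooth hf _) (2-i) hk1 p
  -- now evaluate the double sum
  set A : ℝ := if 2 ≤ k1 then XX r f (k1-2) k2 p else 0 with hA
  set B : ℝ := if 1 ≤ k1 ∧ 1 ≤ k2 then 2 * XX r f (k1-1) (k2-1) p else 0 with hB
  set C : ℝ := if 2 ≤ k2 then XX r f k1 (k2-2) p else 0 with hC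
  have hinner : ∀ i ∈ Finset.range (k2+1), (((2:ℕ).choose i : ℝ) *
      ∑ j ∈ Finset.range (k1+1), (((2:ℕ)-i).choose j : ℝ) *
        (Dop r)^[2-i-j] (pderiv' (r+3) (k1+1-j) (pderiv' (r+3) (k2+1-i) f)) p)
      = (if i = 0 then A else 0) + (if i = 1 then B else 0) + (if i = 2 then C else 0) := by
    intro i hi
    have hik2 : i ≤ k2 := by
      have := Finset.mem_range.mp hi; omega
    have hkill : ∀ j, j ≤ k1 → i + j < 2 →
        (Dop r)^[2-i-j] (pderiv' (r+3) (k1+1-j) (pderiv' (r+3) (k2+1-i) f)) p = 0 := by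
      intro j hj hij
      apply iter_Dop_of_zero
      intro q
      have h1 : k1 + 1 - j = (k1 - j) + 1 := by omega
      have h2 : k2 + 1 - i = (k2 - i) + 1 := by omega
      rw [h1, h2]
      exact H (k1-j) (k2-i) (by omega) q
    by_cases hi0 : i = 0
    · subst hi0
      simp only [if_pos rfl, if_neg (by omega : ¬(0:ℕ) = 1), if_neg (by omega : ¬(0:ℕ) = 2),
        add_zero]
      rw [hA]
      by_cases h2k1 : 2 ≤ k1
      · rw [if_pos h2k1]
        rw [Finset.sum_eq_single_of_mem 2 (Finset.mem_range.mpr (by omega))]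
        · simp only [Nat.choose_zero_right, Nat.cast_one, one_mul, Nat.sub_self]
          have h3 : k1 + 1 - 2 = (k1 - 2) + 1 := by omega
          rw [h3]
          norm_num [XX]
        · intro j _ hj
          by_cases hjlt : j < 2
          · rw [hkill j (by omega) (by omega)]; ring
          · rw [Nat.choose_eq_zero_of_lt (by omega)]; simp
      · rw [if_neg h2k1]
        apply mul_eq_zero_of_right
        apply Finset.sum_eq_zero
        intro j hj
        have hjk : j ≤ k1 := by have := Finset.mem_range.mp hj; omega
        rw [hkill j hjk (by omega)]
        ring
    · by_cases hi1 : i = 1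
      · subst hi1
        simp only [if_neg hi0, if_pos rfl, if_neg (by omega : ¬(1:ℕ) = 2), zero_add, add_zero]
        rw [hB]
        by_cases h1k1 : 1 ≤ k1
        · rw [if_pos (show 1 ≤ k1 ∧ 1 ≤ k2 from ⟨h1k1, by omega⟩)]
          rw [Finset.sum_eq_single_of_mem 1 (Finset.mem_range.mpr (by omega))]
          · have h3 : k1 + 1 - 1 = (k1 - 1) + 1 := by omega
            have h4 : k2 + 1 - 1 = (k2 - 1) + 1 := by omega
            rw [h3, h4]
            norm_num [XX]
          · intro j _ hj
            by_cases hjlt : j < 1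
            · rw [hkill j (by omega) (by omega)]; ring
            · rw [Nat.choose_eq_zero_of_lt (by omega)]; simp
        · rw [if_neg (by omega : ¬(1 ≤ k1 ∧ 1 ≤ k2))]
          apply mul_eq_zero_of_right
          apply Finset.sum_eq_zero
          intro j hj
          have hjk : j ≤ k1 := by have := Finset.mem_range.mp hj; omega
          rw [hkill j hjk (by omega)]
          ring
      · by_cases hi2 : i = 2
        · subst hi2
          simp only [if_neg hi0, if_neg hi1, if_pos rfl, zero_add]
          rw [hC, if_pos (by omega : 2 ≤ k2)]
          rw [Finset.sum_eq_single_of_mem 0 (Finset.mem_range.mpr (by omega))]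
          · have h3 : k2 + 1 - 2 = (k2 - 2) + 1 := by omega
            rw [h3]
            norm_num [XX]
          · intro j _ hj
            rw [Nat.choose_eq_zero_of_lt (by omega)]
            simp
        · rw [Nat.choose_eq_zero_of_lt (show 2 < i by omega)]
          simp only [if_neg hi0, if_neg hi1, if_neg hi2]
          norm_num
  have hsum : ∑ i ∈ Finset.range (k2+1), (((2:ℕ).choose i : ℝ) *
      ∑ j ∈ Finset.range (k1+1), (((2:ℕ)-i).choose j : ℝ) *
        (Dop r)^[2-i-j] (pderiv' (r+3) (k1+1-j) (pderiv' (r+3) (k2+1-i) f)) p)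
      = A + B + C := by
    rw [Finset.sum_congr rfl hinner]
    rw [Finset.sum_add_distrib, Finset.sum_add_distrib]
    congr 1
    congr 1
    · rw [Finset.sum_ite_eq' (Finset.range (k2+1)) 0 (fun _ => A)]
      rw [if_pos (Finset.mem_range.mpr (by omega))]
    · by_cases h : 1 ≤ k2
      · rw [Finset.sum_ite_eq' (Finset.range (k2+1)) 1 (fun _ => B)]
        rw [if_pos (Finset.mem_range.mpr (by omega))]
      · have hk20 : k2 = 0 := by omega
        subst hk20
        rw [hB, if_neg (by omega : ¬(1 ≤ k1 ∧ 1 ≤ 0))]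
        apply Finset.sum_eq_zero
        intro i hi
        rw [if_neg (by have := Finset.mem_range.mp hi; omega)]
    · by_cases h : 2 ≤ k2
      · rw [Finset.sum_ite_eq' (Finset.range (k2+1)) 2 (fun _ => C)]
        rw [if_pos (Finset.mem_range.mpr (by omega))]
      · rw [hC, if_neg h]
        apply Finset.sum_eq_zero
        intro i hi
        rw [if_neg (by have := Finset.mem_range.mp hi; omega)]
  rw [hstep2, hsum] at hzero
  exact hzero


end PartD

section PartE
lemma discrete (N : ℕ) (u : ℕ → ℝ) (h0 : u 0 = 0) (hN : u N = 0)
    (hrec : ∀ c, c + 2 ≤ N → u c - 2*u (c+1) + u (c+2) = 0) : ∀ t, t ≤ N → u t = 0 := by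
  have lin : ∀ t, t ≤ N → u t = t * u 1 := by
    intro t
    induction t using Nat.strong_induction_on with
    | _ t ih =>
      intro ht
      match t with
      | 0 => simpa using h0
      | 1 => simp
      | (c+2) =>
        have h1 := hrec c (by omega)
        have h2 := ih c (by omega) (by omega)
        have h3 := ih (c+1) (by omega) (by omega)
        have h4 : u (c+2) = 2*u (c+1) - u c := by linarith
        rw [h4, h2, h3]
        push_cast
        ring
  intro t ht
  rcases Nat.eq_zero_or_pos N with hN0 | hN1
  · have ht0 : t = 0 := by omega
    rw [ht0]; exact h0
  · have hu1 : u 1 = 0 := by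
      have hl := lin N (le_refl N)
      rw [hN] at hl
      rcases mul_eq_zero.mp hl.symm with h | h
      · exact absurd h (Nat.cast_ne_zero.mpr (by omega))
      · exact h
    rw [lin t ht, hu1, mul_zero]

variable {r : ℕ} {f : (Fin (r+3) → ℝ) → ℝ}

lemma neg_one_pow_ne (t : ℕ) : ((-1:ℝ))^t ≠ 0 := by
  apply pow_ne_zero; norm_num

lemma level (hf : ContDiff ℝ (⊤:ℕ∞) f) (hD : ∀ p, Dop r (Dop r f) p = 0)
    (hz : ∀ p, pderiv' (r+3) (r+2) f p = 0)
    {S : ℕ} (H : ∀ a b, S < a + b → ∀ q, XX r f a b q = 0) :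
    ∀ a b, a + b = S → ∀ q, XX r f a b q = 0 := by
  intro a b hab q
  by_cases hbig : r+1 ≤ a ∨ r+1 ≤ b
  · exact Xtriv hf hz hbig q
  push_neg at hbig
  obtain ⟨ha, hb⟩ := hbig
  by_cases hSr : S ≤ r
  · -- small case : phantom zeros at both ends
    set u : ℕ → ℝ := fun t =>
      if 1 ≤ t ∧ t ≤ S+1 then (-1:ℝ)^t * XX r f (t-1) (S-(t-1)) q else 0 with hu
    have hrec : ∀ c, c + 2 ≤ S+2 → u c - 2*u (c+1) + u (c+2) = 0 := by
      intro c hc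
      have hcS : c ≤ S := by omega
      have R := rel hf hD H (k1 := c+1) (k2 := S+1-c)
        (by omega) (by omega) (by omega) q
      rw [if_pos (show 1 ≤ c+1 ∧ 1 ≤ S+1-c by omega)] at R
      have e1 : u c = (-1:ℝ)^c * (if 2 ≤ c+1 then XX r f (c+1-2) (S+1-c) q else 0) := by
        simp only [hu]
        by_cases h1c : 1 ≤ c
        · rw [if_pos (show 1 ≤ c ∧ c ≤ S+1 by omega), if_pos (show 2 ≤ c+1 by omega)]
          have e1a : c+1-2 = c-1 := by omega
          have e1b : S+1-c = S-(c-1) := by omega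
          rw [e1a, e1b]
        · have hc0 : c = 0 := by omega
          subst hc0
          rw [if_neg (by omega), if_neg (by omega)]
          simp
      have e2 : u (c+1) = -((-1:ℝ)^c * XX r f (c+1-1) (S+1-c-1) q) := by
        simp only [hu]
        rw [if_pos (show 1 ≤ c+1 ∧ c+1 ≤ S+1 by omega)]
        have e2a : c+1-1 = c := by omega
        have e2b : S-(c+1-1) = S-c := by omega
        have e2c : S+1-c-1 = S-c := by omega
        rw [e2b, e2c, e2a, pow_succ]
        ring
      have e3 : u (c+2) = (-1:ℝ)^c * (if 2 ≤ S+1-c then XX r f (c+1) (S+1-c-2) q else 0) := by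
        simp only [hu]
        by_cases h2 : c+2 ≤ S+1
        · rw [if_pos (show 1 ≤ c+2 ∧ c+2 ≤ S+1 by omega), if_pos (show 2 ≤ S+1-c by omega)]
          have e3a : c+2-1 = c+1 := by omega
          have e3b : S-(c+2-1) = S+1-c-2 := by omega
          rw [e3b, e3a, pow_succ, pow_succ]
          ring
        · rw [if_neg (by omega), if_neg (by omega)]
          simp
      rw [e1, e2, e3]
      linear_combination ((-1:ℝ)^c) * R
    have hz0 : u 0 = 0 := by simp only [hu]; simp
    have hzN : u (S+2) = 0 := by simp only [hu]; rw [if_neg (by omega)]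
    have hall := discrete (S+2) u hz0 hzN hrec
    have hta := hall (a+1) (by omega)
    simp only [hu] at hta
    rw [if_pos (show 1 ≤ a+1 ∧ a+1 ≤ S+1 by omega)] at hta
    have e4 : a+1-1 = a := by omega
    rw [e4] at hta
    have e5 : S - a = b := by omega
    rw [e5] at hta
    rcases mul_eq_zero.mp hta with h | h
    · exact absurd h (neg_one_pow_ne _)
    · exact h
  · -- big case : r+1 ≤ S ≤ 2r, endpoints vanish by Xtriv
    have hS1 : r+1 ≤ S := by omega
    have hS2 : S ≤ 2*r := by omega
    set L : ℕ := S - (r+1) with hL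
    set N' : ℕ := 2*r+2-S with hN'
    set u : ℕ → ℝ := fun t => (-1:ℝ)^t * XX r f (L+t) (S-(L+t)) q with hu
    have hrec : ∀ c, c + 2 ≤ N' → u c - 2*u (c+1) + u (c+2) = 0 := by
      intro c hc
      have R := rel hf hD H (k1 := L+c+2) (k2 := r+1-c)
        (by omega) (by omega) (by omega) q
      rw [if_pos (show 2 ≤ L+c+2 by omega),
        if_pos (show 1 ≤ L+c+2 ∧ 1 ≤ r+1-c by omega),
        if_pos (show 2 ≤ r+1-c by omega)] at R
      have e1 : u c = (-1:ℝ)^c * XX r f (L+c+2-2) (r+1-c) q := by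
        simp only [hu]
        have e1a : L+c+2-2 = L+c := by omega
        have e1b : S-(L+c) = r+1-c := by omega
        rw [e1a, e1b]
      have e2 : u (c+1) = -((-1:ℝ)^c * XX r f (L+c+2-1) (r+1-c-1) q) := by
        simp only [hu]
        have e2a : L+c+2-1 = L+(c+1) := by omega
        have e2b : S-(L+(c+1)) = r+1-c-1 := by omega
        rw [e2a, e2b, pow_succ]
        ring
      have e3 : u (c+2) = (-1:ℝ)^c * XX r f (L+c+2) (r+1-c-2) q := by
        simp only [hu]
        have e3a : L+c+2 = L+(c+2) := by omega
        have e3b : S-(L+(c+2)) = r+1-c-2 := by omega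
        rw [e3a, e3b, pow_succ, pow_succ]
        ring
      rw [e1, e2, e3]
      linear_combination ((-1:ℝ)^c) * R
    have hz0 : u 0 = 0 := by
      simp only [hu]
      have : XX r f (L+0) (S-(L+0)) q = 0 := Xtriv hf hz (Or.inr (by omega)) q
      rw [this, mul_zero]
    have hzN : u N' = 0 := by
      simp only [hu]
      have : XX r f (L+N') (S-(L+N')) q = 0 := Xtriv hf hz (Or.inl (by omega)) q
      rw [this, mul_zero]
    have hall := discrete N' u hz0 hzN hrec
    have hta := hall (a-L) (by omega)
    simp only [hu] at hta
    have e4 : L + (a-L) = a := by omega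
    rw [e4] at hta
    have e5 : S - a = b := by omega
    rw [e5] at hta
    rcases mul_eq_zero.mp hta with h | h
    · exact absurd h (neg_one_pow_ne _)
    · exact h

lemma cascade (hf : ContDiff ℝ (⊤:ℕ∞) f) (hD : ∀ p, Dop r (Dop r f) p = 0)
    (hz : ∀ p, pderiv' (r+3) (r+2) f p = 0) :
    ∀ a b q, XX r f a b q = 0 := by
  have main : ∀ d S, 2*r+3 ≤ S + d → ∀ a b, a+b = S → ∀ q, XX r f a b q = 0 := by
    intro d
    induction d with
    | zero =>
      intro S hS a b hab q
      exact Xtriv hf hz (by omega) q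
    | succ d ih =>
      intro S hS a b hab q
      by_cases h : 2*r+3 ≤ S + d
      · exact ih S h a b hab q
      · exact level hf hD hz (fun a' b' hgt q' => ih (a'+b') (by omega) a' b' rfl q') a b hab q
  intro a b q
  exact main (2*r+3) (a+b) (by omega) a b rfl q


end PartE

section PartG
variable {n : ℕ}

lemma fderiv_apply_eq {g : (Fin n → ℝ) → ℝ} (hg : ContDiff ℝ (⊤:ℕ∞) g)
    (q w : Fin n → ℝ) :
    fderiv ℝ g q w = ∑ i : Fin n, w i * pderiv' n (i.val) g q := by
  have hdq : DifferentiableAt ℝ g q := ((hg.differentiable wt_ne_zero) q)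
  conv_lhs => rw [← Finset.univ_sum_single w, map_sum]
  apply Finset.sum_congr rfl
  intro i _
  have h1 : (Pi.single i (w i) : Fin n → ℝ) = w i • (Pi.single i 1 : Fin n → ℝ) := by
    funext j
    by_cases hij : j = i
    · subst hij; simp
    · simp [Pi.single_eq_of_ne hij]
  rw [h1, map_smul]
  unfold pderiv'
  rw [dif_pos i.isLt]
  simp [Fin.eta]

/-- a function whose z-partials all vanish only depends on the x = 0th coordinate -/
lemma const_along_z {g : (Fin (n+1) → ℝ) → ℝ} (hg : ContDiff ℝ (⊤:ℕ∞) g)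
    (hzero : ∀ k, 1 ≤ k → ∀ q, pderiv' (n+1) k g q = 0) (p : Fin (n+1) → ℝ) :
    g p = g (Pi.single 0 (p 0)) := by
  set x0 : Fin (n+1) → ℝ := Pi.single 0 (p 0) with hx0
  set v : Fin (n+1) → ℝ := p - x0 with hv
  have hv0 : v 0 = 0 := by
    simp [hv, hx0]
  have hγ : ∀ t : ℝ, HasDerivAt (fun s : ℝ => x0 + s • v) v t := by
    intro t
    simpa using ((hasDerivAt_id t).smul_const v).const_add x0
  have hder : ∀ t : ℝ, HasDerivAt (fun s : ℝ => g (x0 + s • v)) 0 t := by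
    intro t
    have hgd : HasFDerivAt g (fderiv ℝ g (x0 + t • v)) (x0 + t • v) :=
      ((hg.differentiable wt_ne_zero) _).hasFDerivAt
    have hcomp := hgd.comp_hasDerivAt t (hγ t)
    have : fderiv ℝ g (x0 + t • v) v = 0 := by
      rw [fderiv_apply_eq hg]
      apply Finset.sum_eq_zero
      intro i _
      by_cases hi : i.val = 0
      · have : i = 0 := Fin.ext hi
        rw [this, hv0]
        ring
      · rw [hzero i.val (by omega) _]
        ring
    rw [this] at hcomp
    exact hcomp
  have hconst : (fun s : ℝ => g (x0 + s • v)) 1 = (fun s : ℝ => g (x0 + s • v)) 0 :=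
    is_const_of_deriv_eq_zero (fun t => (hder t).differentiableAt)
      (fun t => (hder t).deriv) 1 0
  simp only [one_smul, zero_smul, add_zero] at hconst
  have hpv : x0 + v = p := by
    rw [hv]; abel
  rw [← hpv]
  exact hconst

lemma affine_rep {r : ℕ} {f : (Fin (r+3) → ℝ) → ℝ} (hf : ContDiff ℝ (⊤:ℕ∞) f)
    (hsec : ∀ a b (q : Fin (r+3) → ℝ),
      pderiv' (r+3) (a+1) (pderiv' (r+3) (b+1) f) q = 0) :
    ∃ (a : ℝ → ℝ) (c : Fin (r+2) → ℝ → ℝ), ∀ p : Fin (r+3) → ℝ,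
      f p = a (p 0) + ∑ m : Fin (r+2),
        c m (p 0) * p ⟨m.val + 1, by omega⟩ := by
  refine ⟨fun x => f (Pi.single 0 x),
    fun m x => pderiv' (r+3) (m.val+1) f (Pi.single 0 x), ?_⟩
  intro p
  set x0 : Fin (r+3) → ℝ := Pi.single 0 (p 0) with hx0
  set v : Fin (r+3) → ℝ := p - x0 with hv
  have hv0 : v 0 = 0 := by simp [hv, hx0]
  have hγ : ∀ t : ℝ, HasDerivAt (fun s : ℝ => x0 + s • v) v t := by
    intro t
    simpa using ((hasDerivAt_id t).smul_const v).const_add x0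
  -- the partial derivatives of f in z-directions are constant along z
  have hpdconst : ∀ (k : ℕ), 1 ≤ k → ∀ q : Fin (r+3) → ℝ,
      pderiv' (r+3) k f q = pderiv' (r+3) k f (Pi.single 0 (q 0)) := by
    intro k hk q
    have h1 : (r+3) = (r+2)+1 := rfl
    exact const_along_z (n := r+2) (pd_smooth hf k)
      (fun k' hk' q' => by
        have h2 : k' = (k'-1)+1 := by omega
        have h3 : k = (k-1)+1 := by omega
        rw [h2, h3]
        exact hsec (k'-1) (k-1) q') q
  set C : ℝ := ∑ i : Fin (r+3), v i * pderiv' (r+3) (i.val) f x0 with hC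
  have hder : ∀ t : ℝ, HasDerivAt (fun s : ℝ => f (x0 + s • v)) C t := by
    intro t
    have hgd : HasFDerivAt f (fderiv ℝ f (x0 + t • v)) (x0 + t • v) :=
      ((hf.differentiable wt_ne_zero) _).hasFDerivAt
    have hcomp := hgd.comp_hasDerivAt t (hγ t)
    have heq : fderiv ℝ f (x0 + t • v) v = C := by
      rw [fderiv_apply_eq hf]
      rw [hC]
      apply Finset.sum_congr rfl
      intro i _
      by_cases hi : i.val = 0
      · have h0 : i = 0 := Fin.ext hi
        rw [h0, hv0]
        ring
      · congr 1
        rw [hpdconst i.val (by omega) (x0 + t • v)]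
        have hcoord : (x0 + t • v) 0 = p 0 := by
          simp [hv0, hx0]
        rw [hcoord]
    rw [heq] at hcomp
    exact hcomp
  -- integrate
  have hψ : ∀ t : ℝ, HasDerivAt (fun s : ℝ => f (x0 + s • v) - s * C) 0 t := by
    intro t
    have := (hder t).sub (hasDerivAt_mul_const (x := t) C)
    rw [sub_self] at this
    exact this
  have hconst : (fun s : ℝ => f (x0 + s • v) - s * C) 1
      = (fun s : ℝ => f (x0 + s • v) - s * C) 0 :=
    is_const_of_deriv_eq_zero (fun t => (hψ t).differentiableAt)
      (fun t => (hψ t).deriv) 1 0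
  simp only [one_smul, zero_smul, add_zero, zero_mul, sub_zero, one_mul] at hconst
  have hpv : x0 + v = p := by rw [hv]; abel
  rw [hpv] at hconst
  have hfp : f p = f x0 + C := by linarith
  rw [hfp]
  congr 1
  -- now compute C
  rw [hC, Fin.sum_univ_succ]
  have h00 : v (0 : Fin (r+3)) = 0 := hv0
  rw [h00, zero_mul, zero_add]
  apply Finset.sum_congr rfl
  intro m _
  have hvm : v m.succ = p m.succ := by
    rw [hv]
    simp [hx0, Pi.single_eq_of_ne (Fin.succ_ne_zero m)]
  rw [hvm]
  have hix : (⟨m.val + 1, by have := m.isLt; omega⟩ : Fin (r+3)) = m.succ := rfl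
  rw [hix]
  have hval : (m.succ : Fin (r+3)).val = m.val + 1 := rfl
  rw [hval]
  ring

end PartG

end Tool

/-- if the smooth `f` satisfies `D(Df) = 0` and `∂f/∂z_{r+1} = 0`, then
`∂²f/∂z_i∂z_j = 0` for all `0 ≤ i, j ≤ r+1`; that is, `f` is an affine-linear function of
`z_0, …, z_{r+1}` with coefficients depending on `x`.  (Coordinate `m+1` is `z_m`.) -/
theorem stmt_8 (r : ℕ) (f : (Fin (r+3) → ℝ) → ℝ) (hf : ContDiff ℝ (⊤ : ℕ∞) f)
    (hD : ∀ p, Dop r (Dop r f) p = 0)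
    (hz : ∀ p, pderiv' (r+3) (r+2) f p = 0) :
    (∀ i ≤ r + 1, ∀ j ≤ r + 1, ∀ p,
      pderiv' (r+3) (i+1) (pderiv' (r+3) (j+1) f) p = 0) ∧
    (∃ (a : ℝ → ℝ) (c : Fin (r+2) → ℝ → ℝ), ∀ p : Fin (r+3) → ℝ,
      f p = a (p 0) + ∑ m : Fin (r+2),
        c m (p 0) * p ⟨m.val + 1, by have := m.isLt; omega⟩) := by
  constructor
  · intro i hi j hj p
    exact Tool.cascade hf hD hz i j p
  · exact Tool.affine_rep hf (fun a b q => Tool.cascade hf hD hz a b q)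
end

section
/- Fix integers r ≥ 0, i with 1 ≤ i ≤ r+1, and j ≥ 1. The functions x, g_{i,j}^{(0)}, g_{i,j}^{(1)}, …, g_{i,j}^{(i)} on ℝ^{r+3} are algebraically independent over ℝ: if P is a real polynomial in i+2 variables such that P(x, g_{i,j}^{(0)}(x,z), …, g_{i,j}^{(i)}(x,z)) = 0 for all (x,z) ∈ ℝ^{r+3}, then P = 0. -/
open scoped BigOperators

/-! ### Auxiliary material -/

/-- The coefficient `c_m = (-1)^{i-m} C(i,m) (i+j-m-1)!/((j-1)!(i+j)!)`. -/
noncomputable def Cc (i j m : ℕ) : ℝ :=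
  (-1 : ℝ) ^ (i - m) * (i.choose m : ℝ) *
    ((Nat.factorial (i + j - m - 1) : ℝ) /
      ((Nat.factorial (j - 1) : ℝ) * (Nat.factorial (i + j) : ℝ)))

/-- Total version of the index `m+1` in `Fin (r+3)`; never equal to `0`. -/
def idx (r m : ℕ) : Fin (r+3) :=
  if h : m + 1 < r + 3 then ⟨m + 1, h⟩ else ⟨1, by omega⟩

lemma idx_ne_zero (r m : ℕ) : idx r m ≠ 0 := by
  unfold idx
  split_ifs <;> simp [Fin.ext_iff]

lemma idx_eq (r m : ℕ) (h : m + 1 < r + 3) : idx r m = ⟨m + 1, h⟩ := dif_pos h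

lemma pderiv'_sum_s9 (r : ℕ) (N : ℕ) (k : ℕ → Fin (r+3)) (hk : ∀ m, k m ≠ 0)
    (c : ℕ → ℝ) (e : ℕ → ℕ) (p : Fin (r+3) → ℝ) :
    pderiv' (r+3) 0 (fun q => ∑ m : Fin N, c m * (q 0) ^ (e m) * q (k m)) p
      = ∑ m : Fin N, c m * ((e m : ℝ) * (p 0) ^ (e m - 1)) * p (k m) := by
  have hn : (0:ℕ) < r + 3 := by omega
  have hz : (⟨0, hn⟩ : Fin (r+3)) = 0 := rfl
  have hF : HasFDerivAt
      (fun q : Fin (r+3) → ℝ => ∑ m : Fin N, c m * (q 0) ^ (e m) * q (k m))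
      (∑ m : Fin N,
        ((c m) • ((p 0 ^ (e m)) • (ContinuousLinearMap.proj (k m) : (Fin (r+3) → ℝ) →L[ℝ] ℝ)
          + (p (k m)) • (((e m : ℝ) * p 0 ^ (e m - 1)) •
              (ContinuousLinearMap.proj (0 : Fin (r+3)) : (Fin (r+3) → ℝ) →L[ℝ] ℝ))))) p := by
    apply HasFDerivAt.fun_sum
    intro m _
    have h0 : HasFDerivAt (fun q : Fin (r+3) → ℝ => q 0)
        (ContinuousLinearMap.proj (0 : Fin (r+3)) : (Fin (r+3) → ℝ) →L[ℝ] ℝ) p :=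
      hasFDerivAt_apply 0 p
    have hk' : HasFDerivAt (fun q : Fin (r+3) → ℝ => q (k m))
        (ContinuousLinearMap.proj (k m) : (Fin (r+3) → ℝ) →L[ℝ] ℝ) p :=
      hasFDerivAt_apply (k m) p
    have hpow : HasFDerivAt (fun q : Fin (r+3) → ℝ => (q 0) ^ (e m))
        (((e m : ℝ) * p 0 ^ (e m - 1)) •
          (ContinuousLinearMap.proj (0 : Fin (r+3)) : (Fin (r+3) → ℝ) →L[ℝ] ℝ)) p :=
      (hasDerivAt_pow (e m) (p 0)).comp_hasFDerivAt p h0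
    have := (hpow.mul hk').const_mul (c m)
    simpa [mul_assoc] using this
  rw [pderiv', dif_pos hn, hz, hF.fderiv]
  simp only [ContinuousLinearMap.sum_apply, ContinuousLinearMap.smul_apply,
    ContinuousLinearMap.add_apply, ContinuousLinearMap.proj_apply, Pi.single_apply]
  refine Finset.sum_congr rfl fun m _ => ?_
  simp only [if_true, smul_eq_mul, smul_zero, mul_zero, zero_add, if_neg (hk m)]
  ring

lemma gs_formula (r i j : ℕ) (hir : i ≤ r + 1) (s : ℕ) :
    gs r i j s = fun p => ∑ m : Fin (i+1),
      Cc i j m.val * (Nat.descFactorial m.val s : ℝ) * (p 0) ^ (m.val - s) * p (idx r m.val) := by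
  induction s with
  | zero =>
    funext p
    show gfun r i j p = _
    unfold gfun
    refine Finset.sum_congr rfl fun m _ => ?_
    have hm : m.val + 1 < r + 3 := by have := m.isLt; omega
    rw [dif_pos hm, idx_eq r m.val hm, Cc]
    simp
  | succ s ih =>
    have : gs r i j (s+1) = pderiv' (r+3) 0 (gs r i j s) := by
      unfold gs
      rw [Function.iterate_succ_apply']
    rw [this, ih]
    funext p
    have h1 := pderiv'_sum_s9 r (i+1) (fun m => idx r m) (fun m => idx_ne_zero r m)
      (fun m => Cc i j m * (Nat.descFactorial m s : ℝ)) (fun m => m - s) p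
    refine Eq.trans h1 ?_
    refine Finset.sum_congr rfl fun m _ => ?_
    rw [Nat.descFactorial_succ, show m.val - s - 1 = m.val - (s+1) from by omega]
    push_cast
    ring

lemma Cc_ne_zero (i j m : ℕ) (hm : m ≤ i) : Cc i j m ≠ 0 := by
  unfold Cc
  refine mul_ne_zero (mul_ne_zero ?_ ?_) ?_
  · exact pow_ne_zero _ (by norm_num)
  · exact Nat.cast_ne_zero.mpr (Nat.choose_pos hm).ne'
  · refine div_ne_zero ?_ ?_ <;> positivity

/-- the functions `x, g_{i,j}^{(0)}, …, g_{i,j}^{(i)}` on `ℝ^{r+3}` are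
algebraically independent over `ℝ`: any real polynomial in `i+2` variables vanishing
identically on them is zero. -/
theorem stmt_9 (r i j : ℕ) (hi : 1 ≤ i) (hir : i ≤ r + 1) (hj : 1 ≤ j)
    (P : MvPolynomial (Fin (i+2)) ℝ)
    (hP : ∀ p : Fin (r+3) → ℝ,
      MvPolynomial.eval
        (fun t : Fin (i+2) => if t.val = 0 then p 0 else gs r i j (t.val - 1) p) P = 0) :
    P = 0 := by
  have key : ∀ v : Fin (i+2) → ℝ, MvPolynomial.eval v P = 0 := by
    intro v
    set a : ℝ := v 0 with ha
    set A : Matrix (Fin (i+1)) (Fin (i+1)) ℝ :=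
      fun s m => Cc i j m.val * (Nat.descFactorial m.val s.val : ℝ) * a ^ (m.val - s.val)
      with hAdef
    have hBT : A.BlockTriangular id := by
      intro s m hsm
      simp only [id] at hsm
      have : Nat.descFactorial m.val s.val = 0 :=
        Nat.descFactorial_eq_zero_iff_lt.mpr hsm
      simp [hAdef, this]
    have hdet : A.det ≠ 0 := by
      rw [Matrix.det_of_upperTriangular hBT]
      refine Finset.prod_ne_zero_iff.mpr fun s _ => ?_
      have h1 : Cc i j s.val ≠ 0 := Cc_ne_zero i j s.val (by have := s.isLt; omega)
      have h2 : (Nat.descFactorial s.val s.val : ℝ) ≠ 0 := by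
        rw [Nat.descFactorial_self]; exact_mod_cast (Nat.factorial_pos s.val).ne'
      simp only [hAdef, Nat.sub_self, pow_zero, mul_one]
      exact mul_ne_zero h1 h2
    set b : Fin (i+1) → ℝ := fun s => v ⟨s.val + 1, by have := s.isLt; omega⟩ with hb
    set z : Fin (i+1) → ℝ := A⁻¹.mulVec b with hz
    have hAz : A.mulVec z = b := by
      rw [hz, Matrix.mulVec_mulVec, Matrix.mul_nonsing_inv _ (isUnit_iff_ne_zero.mpr hdet),
        Matrix.one_mulVec]
    set p : Fin (r+3) → ℝ := fun t =>
      if t.val = 0 then a else if h : t.val - 1 < i + 1 then z ⟨t.val - 1, h⟩ else 0 with hp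
    have hp0 : p 0 = a := by simp [hp]
    have hpz : ∀ m : Fin (i+1), p (idx r m.val) = z m := by
      intro m
      have hm : m.val + 1 < r + 3 := by have := m.isLt; omega
      rw [idx_eq r m.val hm, hp]
      simp [m.isLt]
    have hveq : (fun t : Fin (i+2) => if t.val = 0 then p 0 else gs r i j (t.val - 1) p) = v := by
      funext t
      by_cases ht : t.val = 0
      · have : t = 0 := by exact Fin.ext ht
        simp [this, hp0, ha]
      · rw [if_neg ht]
        obtain ⟨u, hu⟩ : ∃ u : ℕ, t.val = u + 1 := ⟨t.val - 1, by omega⟩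
        have hui : u < i + 1 := by have := t.isLt; omega
        have : gs r i j (t.val - 1) p = A.mulVec z ⟨u, hui⟩ := by
          rw [gs_formula r i j hir, hu]
          simp only [Nat.add_sub_cancel, Matrix.mulVec, dotProduct]
          refine Finset.sum_congr rfl fun m _ => ?_
          rw [hp0, hpz m]
        rw [this, hAz]
        show v ⟨u + 1, by omega⟩ = v t
        exact congrArg v (Fin.ext (by simp [hu]))
    rw [← hveq]
    exact hP p
  have := MvPolynomial.funext (p := P) (q := 0) (fun x => by rw [key x, map_zero])
  exact this
end

section
/- Fix an integer l ≥ 3. On ℝ³ (coordinates x, y, z), let A be the span of x^i y^j ∂z over all integers i, j ≥ 0 with i + j ≤ l−1, and let G be the span of the nine fields ∂x, ∂y, x∂x, x∂y, y∂x, y∂y, z∂z, x²∂x + xy∂y + (l−1)xz∂z, xy∂x + y²∂y + (l−1)yz∂z. Then A is an abelian ideal of the span G + A: the Lie bracket of any two elements of A is zero, and the Lie bracket of any element of G with any element of A lies in A. -/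
open scoped BigOperators

/-- The nine vector fields `∂x, ∂y, x∂x, x∂y, y∂x, y∂y, z∂z,
x²∂x + xy∂y + (l−1)xz∂z, xy∂x + y²∂y + (l−1)yz∂z` on `ℝ³` (coordinates `x, y, z`). -/
noncomputable def nineFields (l : ℕ) : Fin 9 → ((Fin 3 → ℝ) → (Fin 3 → ℝ)) :=
  ![fun _ => ![1, 0, 0],
    fun _ => ![0, 1, 0],
    fun p => ![p 0, 0, 0],
    fun p => ![0, p 0, 0],
    fun p => ![p 1, 0, 0],
    fun p => ![0, p 1, 0],
    fun p => ![0, 0, p 2],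
    fun p => ![(p 0)^2, p 0 * p 1, ((l : ℝ) - 1) * (p 0 * p 2)],
    fun p => ![p 0 * p 1, (p 1)^2, ((l : ℝ) - 1) * (p 1 * p 2)]]

/-- The span `A` of the fields `xⁱ yʲ ∂z`, `i + j ≤ l − 1`, on `ℝ³`. -/
noncomputable def spanA (l : ℕ) : Submodule ℝ ((Fin 3 → ℝ) → (Fin 3 → ℝ)) :=
  Submodule.span ℝ
    {V | ∃ i j : ℕ, i + j ≤ l - 1 ∧ V = fun p => ![0, 0, (p 0) ^ i * (p 1) ^ j]}

/-- The span `G` of the nine fields above. -/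
noncomputable def spanG (l : ℕ) : Submodule ℝ ((Fin 3 → ℝ) → (Fin 3 → ℝ)) :=
  Submodule.span ℝ (Set.range (nineFields l))

/-! ### Auxiliary material -/

/-- The monomial field `xⁱ yʲ ∂z`. -/
noncomputable def mon (i j : ℕ) : (Fin 3 → ℝ) → (Fin 3 → ℝ) :=
  fun p => ![0, 0, (p 0) ^ i * (p 1) ^ j]

lemma fderiv_vec3 (a b c : (Fin 3 → ℝ) → ℝ) (p u : Fin 3 → ℝ)
    (ha : DifferentiableAt ℝ a p) (hb : DifferentiableAt ℝ b p) (hc : DifferentiableAt ℝ c p) :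
    fderiv ℝ (fun q => ![a q, b q, c q]) p u = ![fderiv ℝ a p u, fderiv ℝ b p u, fderiv ℝ c p u] := by
  have h : (fun q => ![a q, b q, c q]) = fun q (k : Fin 3) => (![a, b, c]) k q := by
    funext q k; fin_cases k <;> rfl
  rw [h, fderiv_pi]
  · funext k; fin_cases k <;> simp [ContinuousLinearMap.pi_apply]
  · intro k; fin_cases k <;> simpa

lemma diff_vec3 (a b c : (Fin 3 → ℝ) → ℝ)
    (ha : Differentiable ℝ a) (hb : Differentiable ℝ b) (hc : Differentiable ℝ c) :
    Differentiable ℝ (fun q => ![a q, b q, c q]) := by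
  apply differentiable_pi''
  intro m; fin_cases m <;> simpa

lemma hf_proj (a : Fin 3) (p : Fin 3 → ℝ) :
    HasFDerivAt (fun q : Fin 3 → ℝ => q a)
      (ContinuousLinearMap.proj a : (Fin 3 → ℝ) →L[ℝ] ℝ) p :=
  (ContinuousLinearMap.proj a : (Fin 3 → ℝ) →L[ℝ] ℝ).hasFDerivAt

lemma fd_proj (a : Fin 3) (p u : Fin 3 → ℝ) :
    fderiv ℝ (fun q : Fin 3 → ℝ => q a) p u = u a := by
  rw [(hf_proj a p).fderiv]; rfl

lemma fd_mul (a b : Fin 3) (p u : Fin 3 → ℝ) :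
    fderiv ℝ (fun q : Fin 3 → ℝ => q a * q b) p u = p a * u b + p b * u a := by
  rw [((hf_proj a p).fun_mul (hf_proj b p)).fderiv]
  simp [smul_eq_mul]

lemma fd_cmul (c : ℝ) (a b : Fin 3) (p u : Fin 3 → ℝ) :
    fderiv ℝ (fun q : Fin 3 → ℝ => c * (q a * q b)) p u = c * (p a * u b + p b * u a) := by
  rw [(((hf_proj a p).fun_mul (hf_proj b p)).const_mul c).fderiv]
  simp [smul_eq_mul]; ring

lemma hf_pow (a : Fin 3) (i : ℕ) (p : Fin 3 → ℝ) :
    HasFDerivAt (fun q : Fin 3 → ℝ => (q a) ^ i)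
      (((i : ℝ) * (p a) ^ (i - 1)) • (ContinuousLinearMap.proj a : (Fin 3 → ℝ) →L[ℝ] ℝ)) p :=
  (hasDerivAt_pow i (p a)).comp_hasFDerivAt p (hf_proj a p)

lemma fd_sq (a : Fin 3) (p u : Fin 3 → ℝ) :
    fderiv ℝ (fun q : Fin 3 → ℝ => (q a) ^ 2) p u = 2 * p a * u a := by
  rw [(hf_pow a 2 p).fderiv]
  simp [smul_eq_mul]

lemma fd_mono (i j : ℕ) (p u : Fin 3 → ℝ) :
    fderiv ℝ (fun q : Fin 3 → ℝ => (q 0) ^ i * (q 1) ^ j) p u =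
      (p 0) ^ i * ((j : ℝ) * (p 1) ^ (j - 1) * u 1) +
        (p 1) ^ j * ((i : ℝ) * (p 0) ^ (i - 1) * u 0) := by
  rw [((hf_pow 0 i p).fun_mul (hf_pow 1 j p)).fderiv]
  simp [smul_eq_mul]

lemma diff_mon (i j : ℕ) : Differentiable ℝ (mon i j) := by
  apply differentiable_pi''
  intro k; fin_cases k <;> simp [mon] <;> fun_prop

lemma fderiv_mon_apply (i j : ℕ) (p u : Fin 3 → ℝ) :
    fderiv ℝ (mon i j) p u =
      ![0, 0, (p 0) ^ i * ((j : ℝ) * (p 1) ^ (j - 1) * u 1) +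
        (p 1) ^ j * ((i : ℝ) * (p 0) ^ (i - 1) * u 0)] := by
  rw [show (mon i j) = (fun q => ![(fun _ : Fin 3 → ℝ => (0:ℝ)) q,
      (fun _ : Fin 3 → ℝ => (0:ℝ)) q, (fun q : Fin 3 → ℝ => (q 0) ^ i * (q 1) ^ j) q]) from rfl,
    fderiv_vec3 _ _ _ _ _ (by fun_prop) (by fun_prop) (by fun_prop), fd_mono]
  simp

lemma lieBracket_mon (V : (Fin 3 → ℝ) → (Fin 3 → ℝ)) (i j : ℕ) (p : Fin 3 → ℝ) :
    VectorField.lieBracket ℝ V (mon i j) p =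
      ![0, 0, (p 0) ^ i * ((j : ℝ) * (p 1) ^ (j - 1) * V p 1) +
        (p 1) ^ j * ((i : ℝ) * (p 0) ^ (i - 1) * V p 0)]
        - fderiv ℝ V p (mon i j p) := by
  rw [VectorField.lieBracket, fderiv_mon_apply]

lemma mon_memA {l i j : ℕ} (h : i + j ≤ l - 1) : mon i j ∈ spanA l :=
  Submodule.subset_span ⟨i, j, h, rfl⟩

lemma smul_mon_memA (l : ℕ) (c : ℝ) (i j : ℕ) (h : c = 0 ∨ i + j ≤ l - 1) :
    c • mon i j ∈ spanA l := by
  rcases h with h | h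
  · simp [h]
  · exact Submodule.smul_mem _ _ (mon_memA h)

lemma diffA {l : ℕ} {W : (Fin 3 → ℝ) → (Fin 3 → ℝ)} (hW : W ∈ spanA l) :
    Differentiable ℝ W := by
  induction hW using Submodule.span_induction with
  | mem x hx => obtain ⟨i, j, -, rfl⟩ := hx; exact diff_mon i j
  | zero => exact fun x => differentiableAt_const 0
  | add x y hx hy ihx ihy => exact ihx.add ihy
  | smul c x hx ih => exact ih.const_smul c

lemma lieBracket_zero_left (W : (Fin 3 → ℝ) → (Fin 3 → ℝ)) :
    VectorField.lieBracket ℝ (0 : (Fin 3 → ℝ) → (Fin 3 → ℝ)) W = 0 := by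
  funext p
  simp [VectorField.lieBracket, show (0 : (Fin 3 → ℝ) → (Fin 3 → ℝ)) = fun _ => 0 from rfl]

lemma lieBracket_zero_right (V : (Fin 3 → ℝ) → (Fin 3 → ℝ)) :
    VectorField.lieBracket ℝ V (0 : (Fin 3 → ℝ) → (Fin 3 → ℝ)) = 0 := by
  funext p
  simp [VectorField.lieBracket, show (0 : (Fin 3 → ℝ) → (Fin 3 → ℝ)) = fun _ => 0 from rfl]

lemma bracket_right (l : ℕ) (V : (Fin 3 → ℝ) → (Fin 3 → ℝ)) (hV : Differentiable ℝ V)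
    (h : ∀ i j : ℕ, i + j ≤ l - 1 → VectorField.lieBracket ℝ V (mon i j) ∈ spanA l) :
    ∀ W ∈ spanA l, VectorField.lieBracket ℝ V W ∈ spanA l := by
  intro W hW
  induction hW using Submodule.span_induction with
  | mem x hx => obtain ⟨i, j, hij, rfl⟩ := hx; exact h i j hij
  | zero => rw [lieBracket_zero_right]; exact Submodule.zero_mem _
  | add x y hx hy ihx ihy =>
      have hfun : VectorField.lieBracket ℝ V (x + y) =
          VectorField.lieBracket ℝ V x + VectorField.lieBracket ℝ V y := by
        funext p
        exact VectorField.lieBracket_add_right (diffA hx p) (diffA hy p)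
      rw [hfun]; exact Submodule.add_mem _ ihx ihy
  | smul c x hx ih =>
      have hfun : VectorField.lieBracket ℝ V (c • x) =
          c • VectorField.lieBracket ℝ V x := by
        funext p
        exact VectorField.lieBracket_const_smul_right (diffA hx p)
      rw [hfun]; exact Submodule.smul_mem _ _ ih

lemma QA_memA {l : ℕ} {V : (Fin 3 → ℝ) → (Fin 3 → ℝ)} (hV : V ∈ spanA l) :
    Differentiable ℝ V ∧ (∀ p, V p 0 = 0 ∧ V p 1 = 0) ∧
      ∀ p w, w 0 = 0 → w 1 = 0 → fderiv ℝ V p w = 0 := by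
  induction hV using Submodule.span_induction with
  | mem x hx =>
      obtain ⟨i, j, -, rfl⟩ := hx
      refine ⟨diff_mon i j, fun p => ⟨rfl, rfl⟩, fun p w h0 h1 => ?_⟩
      rw [show (fun p : Fin 3 → ℝ => ![(0:ℝ), 0, (p 0) ^ i * (p 1) ^ j]) = mon i j from rfl,
        fderiv_mon_apply]
      funext k
      fin_cases k <;> simp [h0, h1]
  | zero =>
      refine ⟨fun x => differentiableAt_const 0, fun p => ⟨rfl, rfl⟩, fun p w _ _ => ?_⟩
      rw [show (0 : (Fin 3 → ℝ) → (Fin 3 → ℝ)) = fun _ => 0 from rfl]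
      simp
  | add x y hx hy ihx ihy =>
      refine ⟨ihx.1.add ihy.1, fun p => ?_, fun p w h0 h1 => ?_⟩
      · constructor <;> simp [(ihx.2.1 p).1, (ihx.2.1 p).2, (ihy.2.1 p).1, (ihy.2.1 p).2]
      · rw [fderiv_add (ihx.1 p) (ihy.1 p)]
        simp [ihx.2.2 p w h0 h1, ihy.2.2 p w h0 h1]
  | smul c x hx ih =>
      refine ⟨ih.1.const_smul c, fun p => ?_, fun p w h0 h1 => ?_⟩
      · constructor <;> simp [(ih.2.1 p).1, (ih.2.1 p).2]
      · rw [show (c • x) = fun y => c • x y from rfl, fderiv_fun_const_smul (ih.1 p)]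
        simp [ih.2.2 p w h0 h1]

lemma diffG {l : ℕ} {V : (Fin 3 → ℝ) → (Fin 3 → ℝ)} (hV : V ∈ spanG l) :
    Differentiable ℝ V := by
  induction hV using Submodule.span_induction with
  | mem x hx =>
      obtain ⟨k, rfl⟩ := hx
      fin_cases k <;>
        exact diff_vec3 _ _ _ (by fun_prop) (by fun_prop) (by fun_prop)
  | zero => exact fun x => differentiableAt_const 0
  | add x y hx hy ihx ihy => exact ihx.add ihy
  | smul c x hx ih => exact ih.const_smul c

/-- `A` is an abelian ideal of `G + A`: brackets of elements of `A` vanish and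
the bracket of an element of `G` with an element of `A` lies in `A`. -/
theorem stmt_11 (l : ℕ) (hl : 3 ≤ l) :
    (∀ V ∈ spanA l, ∀ W ∈ spanA l, VectorField.lieBracket ℝ V W = 0) ∧
    (∀ V ∈ spanG l, ∀ W ∈ spanA l, VectorField.lieBracket ℝ V W ∈ spanA l) := by
  constructor
  · intro V hV W hW
    obtain ⟨hVd, hVc, hVf⟩ := QA_memA hV
    obtain ⟨hWd, hWc, hWf⟩ := QA_memA hW
    funext p
    show VectorField.lieBracket ℝ V W p = 0
    rw [VectorField.lieBracket, hWf p (V p) (hVc p).1 (hVc p).2,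
      hVf p (W p) (hWc p).1 (hWc p).2]
    simp
  · intro V hV
    induction hV using Submodule.span_induction with
    | mem x hx =>
        obtain ⟨k, rfl⟩ := hx
        fin_cases k
        · -- ∂x
          show ∀ W ∈ spanA l, VectorField.lieBracket ℝ
            (fun _ : Fin 3 → ℝ => ![(1:ℝ), 0, 0]) W ∈ spanA l
          refine bracket_right l _ (diff_vec3 _ _ _ (by fun_prop) (by fun_prop) (by fun_prop)) ?_
          intro i j hij
          have key : VectorField.lieBracket ℝ (fun _ : Fin 3 → ℝ => ![(1:ℝ), 0, 0]) (mon i j)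
              = (i : ℝ) • mon (i - 1) j := by
            funext p
            rw [lieBracket_mon]
            funext k
            fin_cases k <;> simp [mon]
            ring
          rw [key]
          apply smul_mon_memA
          rcases Nat.eq_zero_or_pos i with h | h
          · left; simp [h]
          · right; omega
        · -- ∂y
          show ∀ W ∈ spanA l, VectorField.lieBracket ℝ
            (fun _ : Fin 3 → ℝ => ![(0:ℝ), 1, 0]) W ∈ spanA l
          refine bracket_right l _ (diff_vec3 _ _ _ (by fun_prop) (by fun_prop) (by fun_prop)) ?_
          intro i j hij
          have key : VectorField.lieBracket ℝ (fun _ : Fin 3 → ℝ => ![(0:ℝ), 1, 0]) (mon i j)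
              = (j : ℝ) • mon i (j - 1) := by
            funext p
            rw [lieBracket_mon]
            funext k
            fin_cases k <;> simp [mon]
            ring
          rw [key]
          apply smul_mon_memA
          rcases Nat.eq_zero_or_pos j with h | h
          · left; simp [h]
          · right; omega
        · -- x ∂x
          show ∀ W ∈ spanA l, VectorField.lieBracket ℝ
            (fun p : Fin 3 → ℝ => ![p 0, 0, 0]) W ∈ spanA l
          refine bracket_right l _ (diff_vec3 _ _ _ (by fun_prop) (by fun_prop) (by fun_prop)) ?_
          intro i j hij
          have key : VectorField.lieBracket ℝ (fun p : Fin 3 → ℝ => ![p 0, 0, 0]) (mon i j)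
              = (i : ℝ) • mon i j := by
            funext p
            rw [lieBracket_mon,
              show (fun p : Fin 3 → ℝ => ![p 0, 0, 0]) = (fun q => ![(fun q : Fin 3 → ℝ => q 0) q,
                (fun _ : Fin 3 → ℝ => (0:ℝ)) q, (fun _ : Fin 3 → ℝ => (0:ℝ)) q]) from rfl,
              fderiv_vec3 _ _ _ _ _ (by fun_prop) (by fun_prop) (by fun_prop), fd_proj]
            funext k
            fin_cases k <;> simp [mon]
            rcases i with _ | n
            · simp
            · simp [pow_succ]; push_cast; ring
          rw [key]
          exact smul_mon_memA l _ i j (Or.inr hij)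
        · -- x ∂y
          show ∀ W ∈ spanA l, VectorField.lieBracket ℝ
            (fun p : Fin 3 → ℝ => ![0, p 0, 0]) W ∈ spanA l
          refine bracket_right l _ (diff_vec3 _ _ _ (by fun_prop) (by fun_prop) (by fun_prop)) ?_
          intro i j hij
          have key : VectorField.lieBracket ℝ (fun p : Fin 3 → ℝ => ![0, p 0, 0]) (mon i j)
              = (j : ℝ) • mon (i + 1) (j - 1) := by
            funext p
            rw [lieBracket_mon,
              show (fun p : Fin 3 → ℝ => ![0, p 0, 0]) = (fun q => ![(fun _ : Fin 3 → ℝ => (0:ℝ)) q,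
                (fun q : Fin 3 → ℝ => q 0) q, (fun _ : Fin 3 → ℝ => (0:ℝ)) q]) from rfl,
              fderiv_vec3 _ _ _ _ _ (by fun_prop) (by fun_prop) (by fun_prop), fd_proj]
            funext k
            fin_cases k <;> simp [mon]
            ring
          rw [key]
          apply smul_mon_memA
          rcases Nat.eq_zero_or_pos j with h | h
          · left; simp [h]
          · right; omega
        · -- y ∂x
          show ∀ W ∈ spanA l, VectorField.lieBracket ℝ
            (fun p : Fin 3 → ℝ => ![p 1, 0, 0]) W ∈ spanA l
          refine bracket_right l _ (diff_vec3 _ _ _ (by fun_prop) (by fun_prop) (by fun_prop)) ?_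
          intro i j hij
          have key : VectorField.lieBracket ℝ (fun p : Fin 3 → ℝ => ![p 1, 0, 0]) (mon i j)
              = (i : ℝ) • mon (i - 1) (j + 1) := by
            funext p
            rw [lieBracket_mon,
              show (fun p : Fin 3 → ℝ => ![p 1, 0, 0]) = (fun q => ![(fun q : Fin 3 → ℝ => q 1) q,
                (fun _ : Fin 3 → ℝ => (0:ℝ)) q, (fun _ : Fin 3 → ℝ => (0:ℝ)) q]) from rfl,
              fderiv_vec3 _ _ _ _ _ (by fun_prop) (by fun_prop) (by fun_prop), fd_proj]
            funext k
            fin_cases k <;> simp [mon]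
            ring
          rw [key]
          apply smul_mon_memA
          rcases Nat.eq_zero_or_pos i with h | h
          · left; simp [h]
          · right; omega
        · -- y ∂y
          show ∀ W ∈ spanA l, VectorField.lieBracket ℝ
            (fun p : Fin 3 → ℝ => ![0, p 1, 0]) W ∈ spanA l
          refine bracket_right l _ (diff_vec3 _ _ _ (by fun_prop) (by fun_prop) (by fun_prop)) ?_
          intro i j hij
          have key : VectorField.lieBracket ℝ (fun p : Fin 3 → ℝ => ![0, p 1, 0]) (mon i j)
              = (j : ℝ) • mon i j := by
            funext p
            rw [lieBracket_mon,
              show (fun p : Fin 3 → ℝ => ![0, p 1, 0]) = (fun q => ![(fun _ : Fin 3 → ℝ => (0:ℝ)) q,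
                (fun q : Fin 3 → ℝ => q 1) q, (fun _ : Fin 3 → ℝ => (0:ℝ)) q]) from rfl,
              fderiv_vec3 _ _ _ _ _ (by fun_prop) (by fun_prop) (by fun_prop), fd_proj]
            funext k
            fin_cases k <;> simp [mon]
            rcases j with _ | n
            · simp
            · simp [pow_succ]; push_cast; ring
          rw [key]
          exact smul_mon_memA l _ i j (Or.inr hij)
        · -- z ∂z
          show ∀ W ∈ spanA l, VectorField.lieBracket ℝ
            (fun p : Fin 3 → ℝ => ![0, 0, p 2]) W ∈ spanA l
          refine bracket_right l _ (diff_vec3 _ _ _ (by fun_prop) (by fun_prop) (by fun_prop)) ?_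
          intro i j hij
          have key : VectorField.lieBracket ℝ (fun p : Fin 3 → ℝ => ![0, 0, p 2]) (mon i j)
              = (-1 : ℝ) • mon i j := by
            funext p
            rw [lieBracket_mon,
              show (fun p : Fin 3 → ℝ => ![0, 0, p 2]) = (fun q => ![(fun _ : Fin 3 → ℝ => (0:ℝ)) q,
                (fun _ : Fin 3 → ℝ => (0:ℝ)) q, (fun q : Fin 3 → ℝ => q 2) q]) from rfl,
              fderiv_vec3 _ _ _ _ _ (by fun_prop) (by fun_prop) (by fun_prop), fd_proj]
            funext k
            fin_cases k <;> simp [mon]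
          rw [key]
          exact smul_mon_memA l _ i j (Or.inr hij)
        · -- x² ∂x + xy ∂y + (l−1) xz ∂z
          show ∀ W ∈ spanA l, VectorField.lieBracket ℝ
            (fun p : Fin 3 → ℝ => ![(p 0)^2, p 0 * p 1, ((l : ℝ) - 1) * (p 0 * p 2)]) W ∈ spanA l
          refine bracket_right l _ (diff_vec3 _ _ _ (by fun_prop) (by fun_prop) (by fun_prop)) ?_
          intro i j hij
          have key : VectorField.lieBracket ℝ
              (fun p : Fin 3 → ℝ => ![(p 0)^2, p 0 * p 1, ((l : ℝ) - 1) * (p 0 * p 2)]) (mon i j)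
              = ((i : ℝ) + (j : ℝ) - ((l : ℝ) - 1)) • mon (i + 1) j := by
            funext p
            rw [lieBracket_mon,
              show (fun p : Fin 3 → ℝ => ![(p 0)^2, p 0 * p 1, ((l : ℝ) - 1) * (p 0 * p 2)])
                = (fun q => ![(fun q : Fin 3 → ℝ => (q 0)^2) q,
                  (fun q : Fin 3 → ℝ => q 0 * q 1) q,
                  (fun q : Fin 3 → ℝ => ((l : ℝ) - 1) * (q 0 * q 2)) q]) from rfl,
              fderiv_vec3 _ _ _ _ _ (by fun_prop) (by fun_prop) (by fun_prop),
              fd_sq, fd_mul, fd_cmul]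
            funext k
            fin_cases k <;> simp [mon]
            rcases i with _ | n <;> rcases j with _ | m <;>
              simp [pow_succ] <;> push_cast <;> ring
          rw [key]
          apply smul_mon_memA
          by_cases h : i + j = l - 1
          · left
            have h2 : i + j + 1 = l := by omega
            have h3 := congrArg (fun n : ℕ => (n : ℝ)) h2
            push_cast at h3
            linarith
          · right; omega
        · -- xy ∂x + y² ∂y + (l−1) yz ∂z
          show ∀ W ∈ spanA l, VectorField.lieBracket ℝ
            (fun p : Fin 3 → ℝ => ![p 0 * p 1, (p 1)^2, ((l : ℝ) - 1) * (p 1 * p 2)]) W ∈ spanA l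
          refine bracket_right l _ (diff_vec3 _ _ _ (by fun_prop) (by fun_prop) (by fun_prop)) ?_
          intro i j hij
          have key : VectorField.lieBracket ℝ
              (fun p : Fin 3 → ℝ => ![p 0 * p 1, (p 1)^2, ((l : ℝ) - 1) * (p 1 * p 2)]) (mon i j)
              = ((i : ℝ) + (j : ℝ) - ((l : ℝ) - 1)) • mon i (j + 1) := by
            funext p
            rw [lieBracket_mon,
              show (fun p : Fin 3 → ℝ => ![p 0 * p 1, (p 1)^2, ((l : ℝ) - 1) * (p 1 * p 2)])
                = (fun q => ![(fun q : Fin 3 → ℝ => q 0 * q 1) q,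
                  (fun q : Fin 3 → ℝ => (q 1)^2) q,
                  (fun q : Fin 3 → ℝ => ((l : ℝ) - 1) * (q 1 * q 2)) q]) from rfl,
              fderiv_vec3 _ _ _ _ _ (by fun_prop) (by fun_prop) (by fun_prop),
              fd_sq, fd_mul, fd_cmul]
            funext k
            fin_cases k <;> simp [mon]
            rcases i with _ | n <;> rcases j with _ | m <;>
              simp [pow_succ] <;> push_cast <;> ring
          rw [key]
          apply smul_mon_memA
          by_cases h : i + j = l - 1
          · left
            have h2 : i + j + 1 = l := by omega
            have h3 := congrArg (fun n : ℕ => (n : ℝ)) h2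
            push_cast at h3
            linarith
          · right; omega
    | zero =>
        intro W hW
        rw [lieBracket_zero_left]
        exact Submodule.zero_mem _
    | add x y hx hy ihx ihy =>
        intro W hW
        have hfun : VectorField.lieBracket ℝ (x + y) W =
            VectorField.lieBracket ℝ x W + VectorField.lieBracket ℝ y W := by
          funext p
          exact VectorField.lieBracket_add_left (diffG hx p) (diffG hy p)
        rw [hfun]
        exact Submodule.add_mem _ (ihx W hW) (ihy W hW)
    | smul c x hx ih =>
        intro W hW
        have hfun : VectorField.lieBracket ℝ (c • x) W =
            c • VectorField.lieBracket ℝ x W := by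
          funext p
          exact VectorField.lieBracket_const_smul_left (diffG hx p)
        rw [hfun]
        exact Submodule.smul_mem _ _ (ih W hW)
end

section
/- Fix an integer l ≥ 3. There exists an injective ℝ-linear map φ from the space of real 3×3 matrices to the space of smooth maps ℝ³ → ℝ³ such that φ(AB − BA) = [φ(A), φ(B)] (Lie bracket of vector fields) for all 3×3 matrices A, B, and such that the range of φ equals the span of the nine vector fields ∂x, ∂y, x∂x, x∂y, y∂x, y∂y, z∂z, x²∂x + xy∂y + (l−1)xz∂z, xy∂x + y²∂y + (l−1)yz∂z on ℝ³ (coordinates x, y, z). In particular this nine-dimensional span is a Lie algebra isomorphic to gl(3,ℝ). -/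
open scoped BigOperators

/-- generic quadratic function on ℝ³ -/
def quadF (e c0 c1 c2 d00 d01 d02 d11 d12 : ℝ) (x : Fin 3 → ℝ) : ℝ :=
  e + c0 * x 0 + c1 * x 1 + c2 * x 2 + d00 * (x 0 * x 0) + d01 * (x 0 * x 1)
    + d02 * (x 0 * x 2) + d11 * (x 1 * x 1) + d12 * (x 1 * x 2)

/-- its derivative at p, as a continuous linear map -/
noncomputable def quadD (c0 c1 c2 d00 d01 d02 d11 d12 : ℝ) (p : Fin 3 → ℝ) :
    (Fin 3 → ℝ) →L[ℝ] ℝ :=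
  (c0 + 2*d00*p 0 + d01*p 1 + d02*p 2) • ContinuousLinearMap.proj 0 +
  ((c1 + d01*p 0 + 2*d11*p 1 + d12*p 2) • ContinuousLinearMap.proj 1 +
   (c2 + d02*p 0 + d12*p 1) • ContinuousLinearMap.proj 2)

lemma quadD_apply (c0 c1 c2 d00 d01 d02 d11 d12 : ℝ) (p v : Fin 3 → ℝ) :
    quadD c0 c1 c2 d00 d01 d02 d11 d12 p v =
      (c0 + 2*d00*p 0 + d01*p 1 + d02*p 2) * v 0 +
      ((c1 + d01*p 0 + 2*d11*p 1 + d12*p 2) * v 1 +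
       (c2 + d02*p 0 + d12*p 1) * v 2) := by
  simp [quadD, ContinuousLinearMap.proj_apply, smul_eq_mul]

lemma quadF_hasFDerivAt (e c0 c1 c2 d00 d01 d02 d11 d12 : ℝ) (p : Fin 3 → ℝ) :
    HasFDerivAt (quadF e c0 c1 c2 d00 d01 d02 d11 d12)
      (quadD c0 c1 c2 d00 d01 d02 d11 d12 p) p := by
  have h0 : HasFDerivAt (fun x : Fin 3 → ℝ => x 0)
      (ContinuousLinearMap.proj (R := ℝ) (φ := fun _ : Fin 3 => ℝ) 0) p := hasFDerivAt_apply 0 p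
  have h1 : HasFDerivAt (fun x : Fin 3 → ℝ => x 1)
      (ContinuousLinearMap.proj (R := ℝ) (φ := fun _ : Fin 3 => ℝ) 1) p := hasFDerivAt_apply 1 p
  have h2 : HasFDerivAt (fun x : Fin 3 → ℝ => x 2)
      (ContinuousLinearMap.proj (R := ℝ) (φ := fun _ : Fin 3 => ℝ) 2) p := hasFDerivAt_apply 2 p
  have H := ((((((((hasFDerivAt_const e p).add (h0.const_mul c0)).add
      (h1.const_mul c1)).add (h2.const_mul c2)).add
      ((h0.mul h0).const_mul d00)).add ((h0.mul h1).const_mul d01)).add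
      ((h0.mul h2).const_mul d02)).add ((h1.mul h1).const_mul d11)).add
      ((h1.mul h2).const_mul d12)
  exact H.congr_fderiv (by
    ext v
    simp [quadD, ContinuousLinearMap.proj_apply, smul_eq_mul]
    ring)

/-- The realization of `gl(3)` as vector fields on `ℝ³`. -/
noncomputable def Phi (t : ℝ) (A : Matrix (Fin 3) (Fin 3) ℝ) :
    (Fin 3 → ℝ) → (Fin 3 → ℝ) := fun x =>
  ![quadF (-A 0 2) (A 2 2 - A 0 0) (-A 0 1) 0 (A 2 0) (A 2 1) 0 0 0 x,
    quadF (-A 1 2) (-A 1 0) (A 2 2 - A 1 1) 0 0 (A 2 0) 0 (A 2 1) 0 x,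
    quadF 0 0 0 (t * A 2 2) 0 0 (t * A 2 0) 0 (t * A 2 1) x]

noncomputable def DPhi (t : ℝ) (A : Matrix (Fin 3) (Fin 3) ℝ) (p : Fin 3 → ℝ) :
    (Fin 3 → ℝ) →L[ℝ] (Fin 3 → ℝ) :=
  ContinuousLinearMap.pi
    ![quadD (A 2 2 - A 0 0) (-A 0 1) 0 (A 2 0) (A 2 1) 0 0 0 p,
      quadD (-A 1 0) (A 2 2 - A 1 1) 0 0 (A 2 0) 0 (A 2 1) 0 p,
      quadD 0 0 (t * A 2 2) 0 0 (t * A 2 0) 0 (t * A 2 1) p]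

lemma Phi_hasFDerivAt (t : ℝ) (A : Matrix (Fin 3) (Fin 3) ℝ) (p : Fin 3 → ℝ) :
    HasFDerivAt (Phi t A) (DPhi t A p) p := by
  apply hasFDerivAt_pi''
  intro i
  fin_cases i <;>
    simp only [Phi, DPhi, ContinuousLinearMap.proj_pi, Fin.isValue,
      Matrix.cons_val_zero, Matrix.cons_val_one, Matrix.head_cons, Fin.mk_zero, Fin.mk_one,
      Matrix.cons_val_two, Matrix.tail_cons] <;>
    exact quadF_hasFDerivAt _ _ _ _ _ _ _ _ _ p

lemma fin3_mk2 (h : 2 < 3) : (⟨2, h⟩ : Fin 3) = 2 := rfl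

lemma Phi_bracket (t : ℝ) (A B : Matrix (Fin 3) (Fin 3) ℝ) :
    Phi t (A * B - B * A) = VectorField.lieBracket ℝ (Phi t A) (Phi t B) := by
  funext p
  rw [VectorField.lieBracket, (Phi_hasFDerivAt t A p).fderiv, (Phi_hasFDerivAt t B p).fderiv]
  funext i
  rw [Pi.sub_apply]
  fin_cases i <;>
  · simp only [Phi, DPhi, ContinuousLinearMap.pi_apply, Fin.isValue, Fin.mk_zero, Fin.mk_one,
      Matrix.cons_val_zero, Matrix.cons_val_one, Matrix.head_cons, Matrix.cons_val_two,
      Matrix.tail_cons, fin3_mk2, quadD_apply, quadF, Matrix.sub_apply, Matrix.mul_apply,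
      Fin.sum_univ_three]
    ring

noncomputable def phiMap (t : ℝ) :
    Matrix (Fin 3) (Fin 3) ℝ →ₗ[ℝ] ((Fin 3 → ℝ) → (Fin 3 → ℝ)) where
  toFun := Phi t
  map_add' A B := by
    funext p i
    fin_cases i <;>
    · simp only [Phi, quadF, Matrix.add_apply, Pi.add_apply, Matrix.cons_val_zero,
        Matrix.cons_val_one, Matrix.head_cons, Matrix.cons_val_two, Matrix.tail_cons,
        Fin.mk_zero, Fin.mk_one, fin3_mk2, Fin.isValue]
      ring
  map_smul' c A := by
    funext p i
    fin_cases i <;>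
    · simp only [Phi, quadF, Matrix.smul_apply, Pi.smul_apply, smul_eq_mul, RingHom.id_apply,
        Matrix.cons_val_zero, Matrix.cons_val_one, Matrix.head_cons, Matrix.cons_val_two,
        Matrix.tail_cons, Fin.mk_zero, Fin.mk_one, fin3_mk2, Fin.isValue]
      ring

lemma Phi_injective (t : ℝ) (ht : t ≠ 0) (A : Matrix (Fin 3) (Fin 3) ℝ)
    (h : Phi t A = 0) : A = 0 := by
  have e : ∀ (p : Fin 3 → ℝ) (i : Fin 3), Phi t A p i = 0 := by
    intro p i; rw [h]; rfl
  have h1 := e ![0,0,1] 2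
  have h2 := e ![1,0,1] 2
  have h3 := e ![0,1,1] 2
  have h4 := e ![0,0,0] 0
  have h5 := e ![0,0,0] 1
  have h6 := e ![1,0,0] 0
  have h7 := e ![0,1,0] 0
  have h8 := e ![1,0,0] 1
  have h9 := e ![0,1,0] 1
  simp only [Phi, quadF, Matrix.cons_val_zero, Matrix.cons_val_one, Matrix.head_cons,
    Matrix.cons_val_two, Matrix.tail_cons, fin3_mk2] at h1 h2 h3 h4 h5 h6 h7 h8 h9
  norm_num at h1 h2 h3 h4 h5 h6 h7 h8 h9
  have k22 : A 2 2 = 0 := h1.resolve_left ht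
  have k20 : A 2 0 = 0 := by
    rw [k22, mul_zero, zero_add] at h2
    exact (mul_eq_zero.mp h2).resolve_left ht
  have k21 : A 2 1 = 0 := by
    rw [k22, mul_zero, zero_add] at h3
    exact (mul_eq_zero.mp h3).resolve_left ht
  ext i j
  fin_cases i <;> fin_cases j <;>
    simp only [Matrix.zero_apply, Fin.mk_zero, Fin.mk_one, fin3_mk2, Fin.isValue] <;>
    linarith

lemma Phi_mem_span (l : ℕ) (A : Matrix (Fin 3) (Fin 3) ℝ) :
    Phi ((l : ℝ) - 1) A ∈ Submodule.span ℝ (Set.range (nineFields l)) := by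
  have hrep : Phi ((l : ℝ) - 1) A =
      (-A 0 2) • (fun _ : Fin 3 → ℝ => ![(1:ℝ), 0, 0]) +
      (-A 1 2) • (fun _ : Fin 3 → ℝ => ![(0:ℝ), 1, 0]) +
      (A 2 2 - A 0 0) • (fun p : Fin 3 → ℝ => ![p 0, 0, 0]) +
      (-A 1 0) • (fun p : Fin 3 → ℝ => ![0, p 0, 0]) +
      (-A 0 1) • (fun p : Fin 3 → ℝ => ![p 1, 0, 0]) +
      (A 2 2 - A 1 1) • (fun p : Fin 3 → ℝ => ![0, p 1, 0]) +
      (((l : ℝ) - 1) * A 2 2) • (fun p : Fin 3 → ℝ => ![0, 0, p 2]) +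
      A 2 0 • (fun p : Fin 3 → ℝ => ![(p 0)^2, p 0 * p 1, ((l : ℝ) - 1) * (p 0 * p 2)]) +
      A 2 1 • (fun p : Fin 3 → ℝ => ![p 0 * p 1, (p 1)^2, ((l : ℝ) - 1) * (p 1 * p 2)]) := by
    funext p i
    fin_cases i <;>
    · simp only [Phi, quadF, Pi.add_apply, Pi.smul_apply, smul_eq_mul,
        Matrix.cons_val_zero, Matrix.cons_val_one, Matrix.head_cons, Matrix.cons_val_two,
        Matrix.tail_cons, fin3_mk2, Fin.mk_zero, Fin.mk_one, Fin.isValue]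
      ring
  have mem : ∀ i : Fin 9, nineFields l i ∈ Submodule.span ℝ (Set.range (nineFields l)) :=
    fun i => Submodule.subset_span ⟨i, rfl⟩
  rw [hrep]
  refine Submodule.add_mem _ (Submodule.add_mem _ (Submodule.add_mem _ (Submodule.add_mem _
    (Submodule.add_mem _ (Submodule.add_mem _ (Submodule.add_mem _ (Submodule.add_mem _
      ?_ ?_) ?_) ?_) ?_) ?_) ?_) ?_) ?_
  · exact Submodule.smul_mem _ _ (mem 0)
  · exact Submodule.smul_mem _ _ (mem 1)
  · exact Submodule.smul_mem _ _ (mem 2)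
  · exact Submodule.smul_mem _ _ (mem 3)
  · exact Submodule.smul_mem _ _ (mem 4)
  · exact Submodule.smul_mem _ _ (mem 5)
  · exact Submodule.smul_mem _ _ (mem 6)
  · exact Submodule.smul_mem _ _ (mem 7)
  · exact Submodule.smul_mem _ _ (mem 8)

/-- there is an injective linear map from `gl(3,ℝ)` to vector fields on `ℝ³`
sending matrix commutators to Lie brackets of vector fields, whose range is the span of the
nine fields above.  In particular this span is a Lie algebra isomorphic to `gl(3,ℝ)`. -/
theorem stmt_12 (l : ℕ) (hl : 3 ≤ l) :
    ∃ φ : Matrix (Fin 3) (Fin 3) ℝ →ₗ[ℝ] ((Fin 3 → ℝ) → (Fin 3 → ℝ)),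
      Function.Injective φ ∧
      (∀ A B : Matrix (Fin 3) (Fin 3) ℝ,
        φ (A * B - B * A) = VectorField.lieBracket ℝ (φ A) (φ B)) ∧
      LinearMap.range φ = Submodule.span ℝ (Set.range (nineFields l)) := by
  have hl3 : (3 : ℝ) ≤ (l : ℝ) := by exact_mod_cast hl
  have ht : ((l : ℝ) - 1) ≠ 0 := by linarith
  refine ⟨phiMap ((l : ℝ) - 1), ?_, ?_, ?_⟩
  · exact (injective_iff_map_eq_zero _).mpr fun A hA => Phi_injective _ ht A hA
  · exact fun A B => Phi_bracket _ A B
  · apply le_antisymm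
    · rintro f ⟨A, rfl⟩
      exact Phi_mem_span l A
    · rw [Submodule.span_le]
      rintro f ⟨i, rfl⟩
      rw [SetLike.mem_coe, LinearMap.mem_range]
      have key : ∀ M : Matrix (Fin 3) (Fin 3) ℝ, ∀ g : (Fin 3 → ℝ) → (Fin 3 → ℝ),
          Phi ((l : ℝ) - 1) M = g → g = nineFields l i → ∃ A, phiMap ((l : ℝ) - 1) A = nineFields l i := by
        rintro M g hM rfl; exact ⟨M, hM⟩
      fin_cases i
      · refine key !![0,0,-1;0,0,0;0,0,0] (fun _ : Fin 3 → ℝ => ![(1:ℝ),0,0]) ?_ rfl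
        funext p j
        fin_cases j <;> · simp [Phi, quadF, fin3_mk2, Matrix.vecHead, Matrix.vecTail]
      · refine key !![0,0,0;0,0,-1;0,0,0] (fun _ : Fin 3 → ℝ => ![(0:ℝ),1,0]) ?_ rfl
        funext p j
        fin_cases j <;> · simp [Phi, quadF, fin3_mk2, Matrix.vecHead, Matrix.vecTail]
      · refine key !![-1,0,0;0,0,0;0,0,0] (fun p : Fin 3 → ℝ => ![p 0,0,0]) ?_ rfl
        funext p j
        fin_cases j <;> · simp [Phi, quadF, fin3_mk2, Matrix.vecHead, Matrix.vecTail]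
      · refine key !![0,0,0;-1,0,0;0,0,0] (fun p : Fin 3 → ℝ => ![0,p 0,0]) ?_ rfl
        funext p j
        fin_cases j <;> · simp [Phi, quadF, fin3_mk2, Matrix.vecHead, Matrix.vecTail]
      · refine key !![0,-1,0;0,0,0;0,0,0] (fun p : Fin 3 → ℝ => ![p 1,0,0]) ?_ rfl
        funext p j
        fin_cases j <;> · simp [Phi, quadF, fin3_mk2, Matrix.vecHead, Matrix.vecTail]
      · refine key !![0,0,0;0,-1,0;0,0,0] (fun p : Fin 3 → ℝ => ![0,p 1,0]) ?_ rfl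
        funext p j
        fin_cases j <;> · simp [Phi, quadF, fin3_mk2, Matrix.vecHead, Matrix.vecTail]
      · refine key !![((l:ℝ)-1)⁻¹,0,0;0,((l:ℝ)-1)⁻¹,0;0,0,((l:ℝ)-1)⁻¹] (fun p : Fin 3 → ℝ => ![0,0,p 2]) ?_ rfl
        funext p j
        fin_cases j <;> · simp [Phi, quadF, fin3_mk2, Matrix.vecHead, Matrix.vecTail]; try field_simp
      · refine key !![0,0,0;0,0,0;1,0,0] (fun p : Fin 3 → ℝ => ![(p 0)^2, p 0 * p 1, ((l : ℝ) - 1) * (p 0 * p 2)]) ?_ rfl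
        funext p j
        fin_cases j <;> · simp [Phi, quadF, fin3_mk2, Matrix.vecHead, Matrix.vecTail]; try ring
      · refine key !![0,0,0;0,0,0;0,1,0] (fun p : Fin 3 → ℝ => ![p 0 * p 1, (p 1)^2, ((l : ℝ) - 1) * (p 1 * p 2)]) ?_ rfl
        funext p j
        fin_cases j <;> · simp [Phi, quadF, fin3_mk2, Matrix.vecHead, Matrix.vecTail]; try ring
end
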